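/- arXiv:1908.07655 — 10 statements merged into one kernel-verified Lean document; each statement's English description precedes it below -/
import Mathlib

section
/- Let 0 < γ₁ < 1 and γ₂ > 1, and define ν(s) = s^{-1-γ₁} for 0 < s ≤ 1 and ν(s) = s^{-1-γ₂} for s > 1. Define f(r) = ∫₀^∞ (1 - e^{-r s}) ν(s) ds for r > 0. Then there exist constants c₁, c₂ > 0 such that c₁ · min(r^{γ₁}, r) ≤ f(r) ≤ c₂ · min(r^{γ₁}, r) for all r > 0. -/
open MeasureTheory Set Real

-- pointwise bounds
lemma aux_le (x : ℝ) : 1 - Real.exp (-x) ≤ x ∧ 1 - Real.exp (-x) ≤ 1 := by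
  constructor
  · have := Real.add_one_le_exp (-x); linarith
  · have := Real.exp_pos (-x); linarith

lemma aux_nonneg {x : ℝ} (hx : 0 ≤ x) : 0 ≤ 1 - Real.exp (-x) := by
  have : Real.exp (-x) ≤ Real.exp 0 := Real.exp_le_exp.2 (by linarith)
  rw [Real.exp_zero] at this; linarith

lemma aux_ge {x : ℝ} (h0 : 0 ≤ x) (h1 : x ≤ 1) :
    (1 - Real.exp (-1)) * x ≤ 1 - Real.exp (-x) := by
  have hconv := convexOn_exp.2 (mem_univ (0:ℝ)) (mem_univ (-1:ℝ))
    (by linarith : (0:ℝ) ≤ 1 - x) h0 (by ring)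
  simp only [smul_eq_mul, mul_zero, mul_neg, mul_one, zero_add, Real.exp_zero] at hconv
  nlinarith [hconv]

-- measurability
lemma aux_meas (r p : ℝ) : Measurable fun s : ℝ => (1 - Real.exp (-(r*s))) * s ^ p := by
  fun_prop

-- integral values
lemma int_Ioc_rpow {p : ℝ} (hp : -1 < p) {a : ℝ} (ha : 0 < a) :
    ∫ s in Ioc (0:ℝ) a, s ^ p = a ^ (p+1) / (p+1) := by
  rw [← intervalIntegral.integral_of_le ha.le, integral_rpow (Or.inl hp),
    Real.zero_rpow (by linarith), sub_zero]

lemma int_Ioc_rpow' {p : ℝ} (hp : p ≠ -1) {a : ℝ} (ha : 0 < a) (ha1 : a ≤ 1) :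
    ∫ s in Ioc a (1:ℝ), s ^ p = (1 - a ^ (p+1)) / (p+1) := by
  rw [← intervalIntegral.integral_of_le ha1, integral_rpow
    (Or.inr ⟨hp, by rw [Set.mem_uIcc]; push_neg; constructor <;> intro h <;> linarith⟩),
    Real.one_rpow]

lemma int_Ioi_rpow {p : ℝ} (hp : p < -1) :
    ∫ s in Ioi (1:ℝ), s ^ p = -1 / (p+1) := by
  rw [integral_Ioi_rpow_of_lt hp one_pos, Real.one_rpow, neg_div]

lemma key_dom (γ r a : ℝ) (hγ : 0 < γ) (hγ' : γ < 1) (hr : 0 < r) (ha : 0 < a) :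
    IntegrableOn (fun s : ℝ => (1 - Real.exp (-(r*s))) * s ^ (-1-γ)) (Ioc 0 a) := by
  have hint : IntegrableOn (fun s : ℝ => s ^ (-γ)) (Ioc 0 a) := by
    have := intervalIntegral.intervalIntegrable_rpow' (show (-1:ℝ) < -γ by linarith)
      (a := 0) (b := a)
    rwa [intervalIntegrable_iff_integrableOn_Ioc_of_le ha.le] at this
  refine Integrable.mono' (hint.const_mul r) ((aux_meas r _).aestronglyMeasurable) ?_
  rw [ae_restrict_iff' measurableSet_Ioc]
  refine ae_of_all _ fun s hs => ?_
  have hs0 := hs.1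
  have h1 : 0 ≤ 1 - Real.exp (-(r*s)) := aux_nonneg (by positivity)
  have h2 : (0:ℝ) ≤ s ^ (-1-γ) := Real.rpow_nonneg hs0.le _
  rw [Real.norm_eq_abs, abs_of_nonneg (mul_nonneg h1 h2)]
  have hss : r * s ^ (-γ) = (r * s) * s ^ (-1-γ) := by
    rw [show (-γ) = 1 + (-1-γ) by ring, Real.rpow_add hs0, Real.rpow_one]; ring
  rw [hss]
  exact mul_le_mul_of_nonneg_right ((aux_le (r*s)).1) h2

lemma key_dom' (γ₂ r : ℝ) (hγ₂ : 1 < γ₂) (hr : 0 < r) :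
    IntegrableOn (fun s : ℝ => (1 - Real.exp (-(r*s))) * s ^ (-1-γ₂)) (Ioi 1) := by
  refine Integrable.mono' (integrableOn_Ioi_rpow_of_lt (show (-1-γ₂:ℝ) < -1 by linarith) one_pos)
    ((aux_meas r _).aestronglyMeasurable) ?_
  rw [ae_restrict_iff' measurableSet_Ioi]
  refine ae_of_all _ fun s hs => ?_
  have hs1 : (1:ℝ) < s := hs
  have h2 : (0:ℝ) ≤ s ^ (-1-γ₂) := Real.rpow_nonneg (by linarith) _
  rw [Real.norm_eq_abs, abs_of_nonneg (mul_nonneg (aux_nonneg (by nlinarith)) h2)]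
  exact mul_le_of_le_one_left h2 (aux_le _).2

lemma up1 (γ r a : ℝ) (hγ : 0 < γ) (hγ' : γ < 1) (hr : 0 < r) (ha : 0 < a) (ha1 : a ≤ 1) :
    ∫ s in Ioc (0:ℝ) a, (1 - Real.exp (-(r*s))) * s ^ (-1-γ) ≤ r * (a ^ (1-γ) / (1-γ)) := by
  have hint : IntegrableOn (fun s : ℝ => s ^ (-γ)) (Ioc 0 a) := by
    have := intervalIntegral.intervalIntegrable_rpow' (show (-1:ℝ) < -γ by linarith)
      (a := 0) (b := a)
    rwa [intervalIntegrable_iff_integrableOn_Ioc_of_le ha.le] at this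
  have hmono := setIntegral_mono_on (key_dom γ r a hγ hγ' hr ha) (hint.const_mul r)
    measurableSet_Ioc (fun s hs => by
      have hs0 := hs.1
      have h2 : (0:ℝ) ≤ s ^ (-1-γ) := Real.rpow_nonneg hs0.le _
      have hss : r * s ^ (-γ) = (r * s) * s ^ (-1-γ) := by
        rw [show (-γ) = 1 + (-1-γ) by ring, Real.rpow_add hs0, Real.rpow_one]; ring
      rw [hss]
      exact mul_le_mul_of_nonneg_right ((aux_le (r*s)).1) h2)
  rwa [integral_const_mul, int_Ioc_rpow (by linarith) ha,
    show (-γ + 1 : ℝ) = 1 - γ by ring] at hmono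

lemma low1 (γ r a : ℝ) (hγ : 0 < γ) (hγ' : γ < 1) (hr : 0 < r) (ha : 0 < a) (ha1 : a ≤ 1)
    (hra : r * a ≤ 1) :
    (1 - Real.exp (-1)) * r * (a ^ (1-γ) / (1-γ)) ≤
      ∫ s in Ioc (0:ℝ) a, (1 - Real.exp (-(r*s))) * s ^ (-1-γ) := by
  have hint : IntegrableOn (fun s : ℝ => s ^ (-γ)) (Ioc 0 a) := by
    have := intervalIntegral.intervalIntegrable_rpow' (show (-1:ℝ) < -γ by linarith)
      (a := 0) (b := a)
    rwa [intervalIntegrable_iff_integrableOn_Ioc_of_le ha.le] at this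
  have hmono := setIntegral_mono_on (hint.const_mul ((1 - Real.exp (-1)) * r))
    (key_dom γ r a hγ hγ' hr ha) measurableSet_Ioc (fun s hs => by
      have hs0 := hs.1
      have h2 : (0:ℝ) ≤ s ^ (-1-γ) := Real.rpow_nonneg hs0.le _
      have hss : (1 - Real.exp (-1)) * r * s ^ (-γ) =
          ((1 - Real.exp (-1)) * (r * s)) * s ^ (-1-γ) := by
        rw [show (-γ) = 1 + (-1-γ) by ring, Real.rpow_add hs0, Real.rpow_one]; ring
      rw [hss]
      refine mul_le_mul_of_nonneg_right (aux_ge (by positivity) ?_) h2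
      calc r * s ≤ r * a := by nlinarith [hs.2]
        _ ≤ 1 := hra)
  rwa [integral_const_mul, int_Ioc_rpow (by linarith) ha,
    show (-γ + 1 : ℝ) = 1 - γ by ring] at hmono

lemma up2 (γ r : ℝ) (hγ : 0 < γ) (hγ' : γ < 1) (hr1 : 1 ≤ r) :
    ∫ s in Ioc (1/r) (1:ℝ), (1 - Real.exp (-(r*s))) * s ^ (-1-γ) ≤ (r ^ γ - 1) / γ := by
  have hr : (0:ℝ) < r := lt_of_lt_of_le one_pos hr1
  have ha : (0:ℝ) < 1/r := by positivity
  have ha1 : (1:ℝ)/r ≤ 1 := by rw [div_le_one hr]; exact hr1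
  have hint : IntegrableOn (fun s : ℝ => s ^ (-1-γ)) (Ioc (1/r) 1) := by
    have := intervalIntegral.intervalIntegrable_rpow (μ := volume) (r := -1-γ) (a := 1/r) (b := 1)
      (Or.inr (by rw [Set.mem_uIcc]; push_neg; constructor <;> intro h <;> linarith))
    rwa [intervalIntegrable_iff_integrableOn_Ioc_of_le ha1] at this
  have hintf : IntegrableOn (fun s : ℝ => (1 - Real.exp (-(r*s))) * s ^ (-1-γ)) (Ioc (1/r) 1) :=
    (key_dom γ r 1 hγ hγ' hr one_pos).mono_set (Ioc_subset_Ioc_left ha.le)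
  have hmono := setIntegral_mono_on hintf hint measurableSet_Ioc (fun s hs => by
    have h2 : (0:ℝ) ≤ s ^ (-1-γ) := Real.rpow_nonneg (le_trans ha.le hs.1.le) _
    exact mul_le_of_le_one_left h2 (aux_le _).2)
  rw [int_Ioc_rpow' (p := -1-γ) (by intro h; apply absurd h; intro h'; nlinarith) ha ha1,
    show (-1-γ+1 : ℝ) = -γ by ring,
    show ((1:ℝ)/r) ^ (-γ) = r ^ γ by
      rw [one_div, ← Real.rpow_neg_one r, ← Real.rpow_mul hr.le]; norm_num] at hmono
  have he : (1 - r ^ γ) / (-γ) = (r ^ γ - 1) / γ := by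
    rw [div_neg]; ring
  linarith [hmono, he.le, he.ge]

lemma up3 (γ₂ r : ℝ) (hγ₂ : 1 < γ₂) (hr : 0 < r) :
    ∫ s in Ioi (1:ℝ), (1 - Real.exp (-(r*s))) * s ^ (-1-γ₂) ≤ 1/γ₂ := by
  have hmono := setIntegral_mono_on (key_dom' γ₂ r hγ₂ hr)
    (integrableOn_Ioi_rpow_of_lt (show (-1-γ₂:ℝ) < -1 by linarith) one_pos)
    measurableSet_Ioi (fun s hs => by
      have hs1 : (1:ℝ) < s := hs
      have h2 : (0:ℝ) ≤ s ^ (-1-γ₂) := Real.rpow_nonneg (by linarith) _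
      exact mul_le_of_le_one_left h2 (aux_le _).2)
  rw [int_Ioi_rpow (by linarith), show (-1-γ₂+1 : ℝ) = -γ₂ by ring, neg_div_neg_eq] at hmono
  exact hmono

lemma up3' (γ₂ r : ℝ) (hγ₂ : 1 < γ₂) (hr : 0 < r) :
    ∫ s in Ioi (1:ℝ), (1 - Real.exp (-(r*s))) * s ^ (-1-γ₂) ≤ r * (1/(γ₂-1)) := by
  have hint : IntegrableOn (fun s : ℝ => s ^ (-γ₂)) (Ioi 1) :=
    integrableOn_Ioi_rpow_of_lt (show (-γ₂:ℝ) < -1 by linarith) one_pos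
  have hmono := setIntegral_mono_on (key_dom' γ₂ r hγ₂ hr) (hint.const_mul r)
    measurableSet_Ioi (fun s hs => by
      have hs1 : (1:ℝ) < s := hs
      have hs0 : (0:ℝ) < s := by linarith
      have h2 : (0:ℝ) ≤ s ^ (-1-γ₂) := Real.rpow_nonneg hs0.le _
      have hss : r * s ^ (-γ₂) = (r * s) * s ^ (-1-γ₂) := by
        rw [show (-γ₂) = 1 + (-1-γ₂) by ring, Real.rpow_add hs0, Real.rpow_one]; ring
      rw [hss]
      exact mul_le_mul_of_nonneg_right ((aux_le (r*s)).1) h2)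
  rw [integral_const_mul, int_Ioi_rpow (by linarith), show (-γ₂+1 : ℝ) = -(γ₂-1) by ring,
    neg_div_neg_eq] at hmono
  exact hmono

/-- two-sided bounds for the Laplace exponent of the subordinator
with Lévy density `ν(s) = s^{-1-γ₁}` for `0 < s ≤ 1` and `s^{-1-γ₂}` for `s > 1`. -/
theorem stmt_0 (γ₁ γ₂ : ℝ) (hγ₁ : 0 < γ₁) (hγ₁' : γ₁ < 1) (hγ₂ : 1 < γ₂)
    (ν : ℝ → ℝ)
    (hν : ∀ s : ℝ, 0 < s → ν s = if s ≤ 1 then s ^ (-1 - γ₁) else s ^ (-1 - γ₂))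
    (f : ℝ → ℝ)
    (hf : ∀ r : ℝ, 0 < r →
      f r = ∫ s in Ioi (0 : ℝ), (1 - Real.exp (-(r * s))) * ν s) :
    ∃ c₁ c₂ : ℝ, 0 < c₁ ∧ 0 < c₂ ∧
      ∀ r : ℝ, 0 < r → c₁ * min (r ^ γ₁) r ≤ f r ∧ f r ≤ c₂ * min (r ^ γ₁) r := by
  
  have he1 : Real.exp (-1) < 1 := by
    have := Real.exp_lt_exp.2 (show (-1:ℝ) < 0 by norm_num)
    rwa [Real.exp_zero] at this
  have h1γ : (0:ℝ) < 1 - γ₁ := by linarith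
  refine ⟨(1 - Real.exp (-1)) / (1 - γ₁), 1/(1-γ₁) + 1/γ₁ + 1/γ₂ + 1/(γ₂-1),
    div_pos (by linarith) h1γ, by
      have a1 : (0:ℝ) < 1/(1-γ₁) := one_div_pos.2 h1γ
      have a2 : (0:ℝ) < 1/γ₁ := one_div_pos.2 hγ₁
      have a3 : (0:ℝ) < 1/γ₂ := one_div_pos.2 (by linarith)
      have a4 : (0:ℝ) < 1/(γ₂-1) := one_div_pos.2 (by linarith)
      linarith, ?_⟩
  intro r hr
  rw [hf r hr]
  have hEq1 : EqOn (fun s => (1 - Real.exp (-(r*s))) * ν s)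
      (fun s : ℝ => (1 - Real.exp (-(r*s))) * s ^ (-1-γ₁)) (Ioc 0 1) := fun s hs => by
    simp only; rw [hν s hs.1, if_pos hs.2]
  have hEq2 : EqOn (fun s => (1 - Real.exp (-(r*s))) * ν s)
      (fun s : ℝ => (1 - Real.exp (-(r*s))) * s ^ (-1-γ₂)) (Ioi 1) := fun s hs => by
    have hs1 : (1:ℝ) < s := hs
    simp only; rw [hν s (by linarith), if_neg (not_le.2 hs1)]
  have hI1g : IntegrableOn (fun s : ℝ => (1 - Real.exp (-(r*s))) * s ^ (-1-γ₁)) (Ioc 0 1) :=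
    key_dom γ₁ r 1 hγ₁ hγ₁' hr one_pos
  have hI2g : IntegrableOn (fun s : ℝ => (1 - Real.exp (-(r*s))) * s ^ (-1-γ₂)) (Ioi 1) :=
    key_dom' γ₂ r hγ₂ hr
  have hI1 : IntegrableOn (fun s => (1 - Real.exp (-(r*s))) * ν s) (Ioc 0 1) :=
    hI1g.congr_fun hEq1.symm measurableSet_Ioc
  have hI2 : IntegrableOn (fun s => (1 - Real.exp (-(r*s))) * ν s) (Ioi 1) :=
    hI2g.congr_fun hEq2.symm measurableSet_Ioi
  have hsplit : (∫ s in Ioi (0:ℝ), (1 - Real.exp (-(r*s))) * ν s) =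
      (∫ s in Ioc (0:ℝ) 1, (1 - Real.exp (-(r*s))) * s ^ (-1-γ₁)) +
      ∫ s in Ioi (1:ℝ), (1 - Real.exp (-(r*s))) * s ^ (-1-γ₂) := by
    rw [← Ioc_union_Ioi_eq_Ioi (zero_le_one (α := ℝ)),
      setIntegral_union Ioc_disjoint_Ioi_same measurableSet_Ioi hI1 hI2,
      setIntegral_congr_fun measurableSet_Ioc hEq1, setIntegral_congr_fun measurableSet_Ioi hEq2]
  have hpos2 : 0 ≤ ∫ s in Ioi (1:ℝ), (1 - Real.exp (-(r*s))) * s ^ (-1-γ₂) :=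
    setIntegral_nonneg measurableSet_Ioi fun s hs => by
      have hs1 : (1:ℝ) < s := hs
      exact mul_nonneg (aux_nonneg (by nlinarith)) (Real.rpow_nonneg (by linarith) _)
  rcases le_total r 1 with hr1 | hr1
  · -- case r ≤ 1
    have hmin : min (r ^ γ₁) r = r := min_eq_right (by
      have := Real.rpow_le_rpow_of_exponent_ge hr hr1 hγ₁'.le
      rwa [Real.rpow_one] at this)
    rw [hmin, hsplit]
    constructor
    · have hlow := low1 γ₁ r 1 hγ₁ hγ₁' hr one_pos le_rfl (by rw [mul_one]; exact hr1)
      rw [Real.one_rpow] at hlow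
      have hc : (1 - Real.exp (-1)) / (1 - γ₁) * r
          = (1 - Real.exp (-1)) * r * (1 / (1-γ₁)) := by ring
      linarith [hlow, hpos2, hc.le, hc.ge]
    · have h1 := up1 γ₁ r 1 hγ₁ hγ₁' hr one_pos le_rfl
      rw [Real.one_rpow] at h1
      have h2 := up3' γ₂ r hγ₂ hr
      have t2 : (0:ℝ) < 1/γ₁ := one_div_pos.2 hγ₁
      have t3 : (0:ℝ) < 1/γ₂ := one_div_pos.2 (by linarith)
      nlinarith [h1, h2]
  · -- case 1 ≤ r
    have hmin : min (r ^ γ₁) r = r ^ γ₁ := min_eq_left (by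
      have := Real.rpow_le_rpow_of_exponent_le hr1 hγ₁'.le
      rwa [Real.rpow_one] at this)
    have ha : (0:ℝ) < 1/r := by positivity
    have ha1 : (1:ℝ)/r ≤ 1 := by rw [div_le_one hr]; exact hr1
    have hA : ((1:ℝ)/r) ^ (1-γ₁) = r ^ (γ₁-1) := by
      rw [one_div, ← Real.rpow_neg_one r, ← Real.rpow_mul hr.le]; congr 1; ring
    have hB : r * r ^ (γ₁-1) = r ^ γ₁ := by
      have := Real.rpow_add hr 1 (γ₁-1)
      rw [Real.rpow_one, show (1 + (γ₁ - 1)) = γ₁ by ring] at this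
      exact this.symm
    have hX1 : (1:ℝ) ≤ r ^ γ₁ := Real.one_le_rpow hr1 hγ₁.le
    have hsplit2 : (∫ s in Ioc (0:ℝ) 1, (1 - Real.exp (-(r*s))) * s ^ (-1-γ₁)) =
        (∫ s in Ioc (0:ℝ) (1/r), (1 - Real.exp (-(r*s))) * s ^ (-1-γ₁)) +
        ∫ s in Ioc ((1:ℝ)/r) 1, (1 - Real.exp (-(r*s))) * s ^ (-1-γ₁) := by
      rw [← Ioc_union_Ioc_eq_Ioc ha.le ha1,
        setIntegral_union (Ioc_disjoint_Ioc_of_le le_rfl) measurableSet_Ioc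
          (hI1g.mono_set (Ioc_subset_Ioc_right ha1)) (hI1g.mono_set (Ioc_subset_Ioc_left ha.le))]
    rw [hmin, hsplit]
    constructor
    · have hlow := low1 γ₁ r (1/r) hγ₁ hγ₁' hr ha ha1
        (le_of_eq (mul_one_div_cancel hr.ne'))
      rw [hA] at hlow
      have hg1nn : 0 ≤ᵐ[volume.restrict (Ioc (0:ℝ) 1)]
          fun s : ℝ => (1 - Real.exp (-(r*s))) * s ^ (-1-γ₁) := by
        filter_upwards [ae_restrict_mem measurableSet_Ioc] with s hs
        exact mul_nonneg (aux_nonneg (mul_nonneg hr.le hs.1.le)) (Real.rpow_nonneg hs.1.le _)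
      have hmid : (∫ s in Ioc (0:ℝ) (1/r), (1 - Real.exp (-(r*s))) * s ^ (-1-γ₁)) ≤
          ∫ s in Ioc (0:ℝ) 1, (1 - Real.exp (-(r*s))) * s ^ (-1-γ₁) :=
        setIntegral_mono_set hI1g hg1nn ((Ioc_subset_Ioc_right ha1).eventuallyLE)
      have hc : (1 - Real.exp (-1)) * r * (r^(γ₁-1)/(1-γ₁))
          = (1 - Real.exp (-1))/(1-γ₁) * (r^γ₁) := by rw [← hB]; ring
      linarith [hlow, hmid, hpos2, hc.le, hc.ge]
    · have h1 := up1 γ₁ r (1/r) hγ₁ hγ₁' hr ha ha1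
      rw [hA] at h1
      have h2 := up2 γ₁ r hγ₁ hγ₁' hr1
      have h3 := up3 γ₂ r hγ₂ hr
      rw [hsplit2]
      have e1 : r * (r^(γ₁-1)/(1-γ₁)) = r^γ₁/(1-γ₁) := by rw [← hB]; ring
      have t1 : (r^γ₁-1)/γ₁ ≤ r^γ₁/γ₁ := (div_le_div_iff_of_pos_right hγ₁).2 (by linarith)
      have t2 : 1/γ₂ ≤ r^γ₁/γ₂ := (div_le_div_iff_of_pos_right (by linarith)).2 hX1
      have t3 : (0:ℝ) ≤ r^γ₁/(γ₂-1) := div_nonneg (by linarith) (by linarith)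
      have hc2X : (1/(1-γ₁)+1/γ₁+1/γ₂+1/(γ₂-1)) * (r^γ₁)
          = r^γ₁/(1-γ₁) + r^γ₁/γ₁ + r^γ₁/γ₂ + r^γ₁/(γ₂-1) := by ring
      linarith [h1, h2, h3, e1.le, e1.ge, hc2X.le, hc2X.ge]
end

section
/- Let φ : (0,∞) → (0,∞) be measurable with 0 < ∫₀^1 s/φ(s) ds < ∞, and suppose there exist constants c > 0 and β* with 1 < β* < 2 such that φ(R)/φ(r) ≥ c (R/r)^{β*} for all 1 ≤ r ≤ R. Then there exists a constant C > 0 such that for every r ≥ 1 and every integer n ≥ 0, ∫₀^{2ⁿ r} s/φ(s) ds ≤ C · 2^{n(2-β*)} · ∫₀^r s/φ(s) ds. -/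
open MeasureTheory Set Real

/-- under a lower scaling bound with index `1 < β* < 2` for `φ` on `[1,∞)`,
`∫₀^{2ⁿ r} s/φ(s) ds ≤ C 2^{n(2-β*)} ∫₀^r s/φ(s) ds` for all `r ≥ 1` and `n ≥ 0`. -/
theorem stmt_3 (φ : ℝ → ℝ) (hφmeas : Measurable φ) (hφpos : ∀ s : ℝ, 0 < s → 0 < φ s)
    (hint : IntegrableOn (fun s => s / φ s) (Ioc 0 1))
    (hintpos : 0 < ∫ s in Ioc (0 : ℝ) 1, s / φ s)
    (c β : ℝ) (hc : 0 < c) (hβ : 1 < β) (hβ' : β < 2)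
    (hscale : ∀ r R : ℝ, 1 ≤ r → r ≤ R → c * (R / r) ^ β ≤ φ R / φ r) :
    ∃ C : ℝ, 0 < C ∧ ∀ r : ℝ, 1 ≤ r → ∀ n : ℕ,
      IntegrableOn (fun s => s / φ s) (Ioc 0 ((2 : ℝ) ^ n * r)) ∧
      (∫ s in Ioc (0 : ℝ) ((2 : ℝ) ^ n * r), s / φ s) ≤
        C * (2 : ℝ) ^ ((n : ℝ) * (2 - β)) * ∫ s in Ioc (0 : ℝ) r, s / φ s := by
  have hφ1 : 0 < φ 1 := hφpos 1 one_pos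
  have h2β : (0:ℝ) < 2 - β := by linarith
  have hmg : Measurable fun s : ℝ => s / φ s := measurable_id.div hφmeas
  -- pointwise upper bound on [r, ∞)
  have hub : ∀ r s : ℝ, 1 ≤ r → r ≤ s → s / φ s ≤ r ^ β / (c * φ r) * s ^ (1 - β) := by
    intro r s hr hrs
    have hr0 : (0:ℝ) < r := lt_of_lt_of_le one_pos hr
    have hs0 : (0:ℝ) < s := lt_of_lt_of_le hr0 hrs
    have hφr := hφpos r hr0
    have hφs := hφpos s hs0
    have h1 := hscale r s hr hrs
    have hsb := rpow_pos_of_pos hs0 β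
    have hrb := rpow_pos_of_pos hr0 β
    have h2 : c * (s ^ β / r ^ β) * φ r ≤ φ s := by
      rw [← div_rpow hs0.le hr0.le]
      calc c * (s / r) ^ β * φ r ≤ (φ s / φ r) * φ r :=
            mul_le_mul_of_nonneg_right h1 hφr.le
        _ = φ s := div_mul_cancel₀ _ (ne_of_gt hφr)
    have hd0 : 0 < c * (s ^ β / r ^ β) * φ r := by positivity
    have h4 : s / φ s ≤ s / (c * (s ^ β / r ^ β) * φ r) :=
      div_le_div_of_nonneg_left hs0.le hd0 h2
    refine h4.trans_eq ?_
    rw [rpow_sub hs0, rpow_one]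
    field_simp
  -- pointwise lower bound on [1, r]
  have hlb : ∀ r s : ℝ, 1 ≤ s → s ≤ r → c * r ^ β / φ r * s ^ (1 - β) ≤ s / φ s := by
    intro r s hs hsr
    have hs0 : (0:ℝ) < s := lt_of_lt_of_le one_pos hs
    have hr0 : (0:ℝ) < r := lt_of_lt_of_le hs0 hsr
    have hφr := hφpos r hr0
    have hφs := hφpos s hs0
    have h1 := hscale s r hs hsr
    have hsb := rpow_pos_of_pos hs0 β
    have hrb := rpow_pos_of_pos hr0 β
    have h2 : c * (r ^ β / s ^ β) * φ s ≤ φ r := by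
      rw [← div_rpow hr0.le hs0.le]
      calc c * (r / s) ^ β * φ s ≤ (φ r / φ s) * φ s :=
            mul_le_mul_of_nonneg_right h1 hφs.le
        _ = φ r := div_mul_cancel₀ _ (ne_of_gt hφs)
    have hX : 0 < c * (r ^ β / s ^ β) := by positivity
    have h3 : φ s ≤ φ r / (c * (r ^ β / s ^ β)) := (le_div_iff₀ hX).mpr (by linarith [h2])
    have h4 : s / (φ r / (c * (r ^ β / s ^ β))) ≤ s / φ s :=
      div_le_div_of_nonneg_left hs0.le hφs h3
    refine le_trans (le_of_eq ?_) h4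
    rw [rpow_sub hs0, rpow_one]
    field_simp
  -- integrability on Ioc a b for 1 ≤ a
  have hintT : ∀ a b : ℝ, 1 ≤ a → IntegrableOn (fun s => s / φ s) (Ioc a b) := by
    intro a b ha
    refine Measure.integrableOn_of_bounded (M := 1 / (c * φ 1)) ?_ hmg.aestronglyMeasurable ?_
    · exact (measure_Ioc_lt_top).ne
    · filter_upwards [ae_restrict_mem measurableSet_Ioc] with s hs
      have hs1 : (1:ℝ) ≤ s := le_trans ha hs.1.le
      have hs0 : (0:ℝ) < s := lt_of_lt_of_le one_pos hs1
      have hnn : 0 ≤ s / φ s := div_nonneg hs0.le (hφpos s hs0).le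
      rw [Real.norm_of_nonneg hnn]
      have := hub 1 s le_rfl hs1
      have hsle : s ^ (1 - β) ≤ 1 :=
        rpow_le_one_of_one_le_of_nonpos hs1 (by linarith)
      calc s / φ s ≤ 1 ^ β / (c * φ 1) * s ^ (1 - β) := this
        _ ≤ 1 ^ β / (c * φ 1) * 1 := by
            apply mul_le_mul_of_nonneg_left hsle (by positivity)
        _ = 1 / (c * φ 1) := by rw [one_rpow, mul_one]
  have hint0 : ∀ b : ℝ, 1 ≤ b → IntegrableOn (fun s => s / φ s) (Ioc 0 b) := by
    intro b hb
    rw [← Ioc_union_Ioc_eq_Ioc (by norm_num : (0:ℝ) ≤ 1) hb]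
    exact hint.union (hintT 1 b le_rfl)
  -- splitting of integrals
  have hsplit : ∀ a b : ℝ, 1 ≤ a → a ≤ b →
      (∫ s in Ioc (0:ℝ) b, s / φ s) =
        (∫ s in Ioc (0:ℝ) a, s / φ s) + ∫ s in Ioc a b, s / φ s := by
    intro a b ha hab
    rw [← Ioc_union_Ioc_eq_Ioc (le_trans zero_le_one ha) hab]
    exact setIntegral_union (Ioc_disjoint_Ioc_of_le le_rfl) measurableSet_Ioc
      (hint0 a ha) (hintT a b ha)
  -- nonnegativity of tail integrals
  have htnn : ∀ a b : ℝ, 0 ≤ a → (0:ℝ) ≤ ∫ s in Ioc a b, s / φ s := by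
    intro a b ha
    refine setIntegral_nonneg measurableSet_Ioc fun x hx => ?_
    have hx0 : 0 < x := lt_of_le_of_lt ha hx.1
    exact div_nonneg hx0.le (hφpos x hx0).le
  -- monotonicity
  have hmono : ∀ a b : ℝ, 1 ≤ a → a ≤ b →
      (∫ s in Ioc (0:ℝ) a, s / φ s) ≤ ∫ s in Ioc (0:ℝ) b, s / φ s := by
    intro a b ha hab
    rw [hsplit a b ha hab]
    linarith [htnn a b (le_trans zero_le_one ha)]
  -- integral of rpow
  have hrint : ∀ a b : ℝ, 0 < a → a ≤ b →
      (∫ s in Ioc a b, s ^ (1 - β)) = (b ^ (2 - β) - a ^ (2 - β)) / (2 - β) := by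
    intro a b ha hab
    rw [← intervalIntegral.integral_of_le hab,
      integral_rpow (Or.inl (by linarith : (-1:ℝ) < 1 - β))]
    rw [show (1:ℝ) - β + 1 = 2 - β by ring]
  have hrintg : ∀ a b : ℝ, 0 < a → IntegrableOn (fun s : ℝ => s ^ (1 - β)) (Ioc a b) := by
    intro a b ha
    rcases le_or_gt a b with hab | hab
    · exact (intervalIntegrable_iff_integrableOn_Ioc_of_le hab).mp
        (intervalIntegral.intervalIntegrable_rpow (Or.inr (by
          simp [uIcc_of_le hab]
          intro h; linarith)))
    · simp [Ioc_eq_empty (not_lt.mpr hab.le)]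
  -- tail upper bound
  have htail : ∀ r T : ℝ, 1 ≤ r → r ≤ T →
      (∫ s in Ioc r T, s / φ s) ≤ r ^ β / (c * φ r) * (T ^ (2 - β) / (2 - β)) := by
    intro r T hr hrT
    have hr0 : (0:ℝ) < r := lt_of_lt_of_le one_pos hr
    have hφr := hφpos r hr0
    have hconst : (0:ℝ) ≤ r ^ β / (c * φ r) := by positivity
    calc (∫ s in Ioc r T, s / φ s)
        ≤ ∫ s in Ioc r T, r ^ β / (c * φ r) * s ^ (1 - β) := by
          refine setIntegral_mono_on (hintT r T hr) ?_ measurableSet_Ioc ?_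
          · exact (hrintg r T hr0).const_mul _
          · intro x hx; exact hub r x hr hx.1.le
      _ = r ^ β / (c * φ r) * ∫ s in Ioc r T, s ^ (1 - β) := by
          rw [integral_const_mul]
      _ = r ^ β / (c * φ r) * ((T ^ (2 - β) - r ^ (2 - β)) / (2 - β)) := by
          rw [hrint r T hr0 hrT]
      _ ≤ r ^ β / (c * φ r) * (T ^ (2 - β) / (2 - β)) := by
          have hrnn : (0:ℝ) ≤ r ^ (2 - β) := rpow_nonneg hr0.le _
          gcongr
          linarith
  -- lower bound constant
  set I1 : ℝ := ∫ s in Ioc (0:ℝ) 1, s / φ s with hI1def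
  set k : ℝ := 1 - ((2:ℝ) ^ (2 - β))⁻¹ with hkdef
  have h2pow : (1:ℝ) < (2:ℝ) ^ (2 - β) := by
    have := rpow_lt_rpow_of_exponent_lt (by norm_num : (1:ℝ) < 2) h2β
    rwa [rpow_zero] at this
  have hk : 0 < k := by
    have : ((2:ℝ) ^ (2 - β))⁻¹ < 1 := inv_lt_one_of_one_lt₀ h2pow
    simp only [hkdef]; linarith
  set M : ℝ := max ((2 - β) / (c * k)) (4 / (c * φ 1 * I1)) with hMdef
  have hM : 0 < M := lt_max_of_lt_left (by positivity)
  -- the key lower bound : r^β * r^(2-β) / φ r ≤ M * I r for r ≥ 1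
  have hJle : ∀ r : ℝ, 1 ≤ r →
      r ^ β * r ^ (2 - β) / φ r ≤ M * ∫ s in Ioc (0:ℝ) r, s / φ s := by
    intro r hr
    have hr0 : (0:ℝ) < r := lt_of_lt_of_le one_pos hr
    have hφr := hφpos r hr0
    have hβ0 : (0:ℝ) ≤ β := by linarith
    rcases le_total r 2 with hr2 | hr2
    · -- small r
      have h1 : r ^ β * r ^ (2 - β) = r ^ (2:ℝ) := by
        rw [← rpow_add hr0]; norm_num
      have h2 : r ^ (2:ℝ) ≤ 4 := by
        calc r ^ (2:ℝ) ≤ (2:ℝ) ^ (2:ℝ) := rpow_le_rpow hr0.le hr2 (by norm_num)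
          _ = 4 := by
              rw [show ((2:ℝ):ℝ) = ((2:ℕ):ℝ) by norm_num, rpow_natCast]; norm_num
      have hrβ1 : (1:ℝ) ≤ r ^ β := by
        have := rpow_le_rpow zero_le_one hr hβ0
        rwa [one_rpow] at this
      have hφrlow : c * φ 1 ≤ φ r := by
        have h3 := hscale 1 r le_rfl hr
        rw [div_one] at h3
        have h4 : c * r ^ β * φ 1 ≤ (φ r / φ 1) * φ 1 :=
          mul_le_mul_of_nonneg_right h3 hφ1.le
        rw [div_mul_cancel₀ _ (ne_of_gt hφ1)] at h4
        nlinarith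
      have hIr : I1 ≤ ∫ s in Ioc (0:ℝ) r, s / φ s := hmono 1 r le_rfl hr
      have hI1ne : I1 ≠ 0 := ne_of_gt hintpos
      calc r ^ β * r ^ (2 - β) / φ r ≤ 4 / (c * φ 1) := by
            rw [h1]
            exact div_le_div₀ (by norm_num) h2 (by positivity) hφrlow
        _ = (4 / (c * φ 1 * I1)) * I1 := by field_simp
        _ ≤ M * I1 := mul_le_mul_of_nonneg_right (le_max_right _ _) hintpos.le
        _ ≤ M * ∫ s in Ioc (0:ℝ) r, s / φ s := mul_le_mul_of_nonneg_left hIr hM.le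
    · -- large r
      have hIr : (∫ s in Ioc (1:ℝ) r, s / φ s) ≤ ∫ s in Ioc (0:ℝ) r, s / φ s := by
        rw [hsplit 1 r le_rfl hr]
        linarith [hintpos]
      have hlow : c * r ^ β / φ r * ((r ^ (2 - β) - 1) / (2 - β)) ≤
          ∫ s in Ioc (1:ℝ) r, s / φ s := by
        have hconst : (0:ℝ) ≤ c * r ^ β / φ r := by positivity
        calc c * r ^ β / φ r * ((r ^ (2 - β) - 1) / (2 - β))
            = c * r ^ β / φ r * ∫ s in Ioc (1:ℝ) r, s ^ (1 - β) := by
              rw [hrint 1 r one_pos hr, one_rpow]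
          _ = ∫ s in Ioc (1:ℝ) r, c * r ^ β / φ r * s ^ (1 - β) := by
              rw [integral_const_mul]
          _ ≤ ∫ s in Ioc (1:ℝ) r, s / φ s := by
              refine setIntegral_mono_on ((hrintg 1 r one_pos).const_mul _)
                (hintT 1 r le_rfl) measurableSet_Ioc ?_
              intro x hx; exact hlb r x hx.1.le hx.2
      -- r^(2-β) - 1 ≥ k * r^(2-β)
      have hone : (1:ℝ) ≤ (r / 2) ^ (2 - β) := by
        have h12 : (1:ℝ) ≤ r / 2 := by linarith
        have := rpow_le_rpow zero_le_one h12 h2β.le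
        rwa [one_rpow] at this
      have heq : (r / 2) ^ (2 - β) = r ^ (2 - β) * ((2:ℝ) ^ (2 - β))⁻¹ := by
        rw [div_rpow hr0.le (by norm_num : (0:ℝ) ≤ 2), div_eq_mul_inv]
      have hkr : k * r ^ (2 - β) ≤ r ^ (2 - β) - 1 := by
        rw [heq] at hone
        simp only [hkdef]
        nlinarith
      have hstep : c * k / (2 - β) * (r ^ β * r ^ (2 - β) / φ r) ≤
          ∫ s in Ioc (0:ℝ) r, s / φ s := by
        refine le_trans ?_ (le_trans hlow hIr)
        have hconst : (0:ℝ) ≤ c * r ^ β / φ r := by positivity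
        have := mul_le_mul_of_nonneg_left
          (div_le_div_of_nonneg_right hkr h2β.le) hconst
        calc c * k / (2 - β) * (r ^ β * r ^ (2 - β) / φ r)
            = c * r ^ β / φ r * (k * r ^ (2 - β) / (2 - β)) := by
              field_simp
          _ ≤ c * r ^ β / φ r * ((r ^ (2 - β) - 1) / (2 - β)) := this
      have hpos : (0:ℝ) < (2 - β) / (c * k) := by positivity
      have h6 := mul_le_mul_of_nonneg_left hstep hpos.le
      calc r ^ β * r ^ (2 - β) / φ r
          = (2 - β) / (c * k) * (c * k / (2 - β) * (r ^ β * r ^ (2 - β) / φ r)) := by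
            field_simp
        _ ≤ (2 - β) / (c * k) * ∫ s in Ioc (0:ℝ) r, s / φ s := h6
        _ ≤ M * ∫ s in Ioc (0:ℝ) r, s / φ s :=
            mul_le_mul_of_nonneg_right (le_max_left _ _)
              (le_trans hintpos.le (hmono 1 r le_rfl hr))
  refine ⟨1 + M / (c * (2 - β)), by positivity, ?_⟩
  intro r hr n
  have hr0 : (0:ℝ) < r := lt_of_lt_of_le one_pos hr
  have h2n : (1:ℝ) ≤ (2:ℝ) ^ n := one_le_pow₀ (by norm_num)
  set T : ℝ := (2:ℝ) ^ n * r with hTdef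
  have hrT : r ≤ T := le_mul_of_one_le_left hr0.le h2n
  have hT1 : (1:ℝ) ≤ T := le_trans hr hrT
  refine ⟨hint0 T hT1, ?_⟩
  set E : ℝ := (2:ℝ) ^ ((n:ℝ) * (2 - β)) with hEdef
  have hE1 : (1:ℝ) ≤ E := by
    have := rpow_le_rpow_of_exponent_le (by norm_num : (1:ℝ) ≤ 2)
      (by positivity : (0:ℝ) ≤ (n:ℝ) * (2 - β))
    rwa [rpow_zero] at this
  have hE0 : (0:ℝ) ≤ E := le_trans zero_le_one hE1
  have hT2β : T ^ (2 - β) = E * r ^ (2 - β) := by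
    rw [hTdef, mul_rpow (by positivity) hr0.le, ← rpow_natCast (2:ℝ) n,
      ← rpow_mul (by norm_num : (0:ℝ) ≤ 2)]
  have hIr0 : (0:ℝ) ≤ ∫ s in Ioc (0:ℝ) r, s / φ s := htnn 0 r le_rfl
  have hφr := hφpos r hr0
  have htail2 : (∫ s in Ioc r T, s / φ s) ≤
      E * (M * ∫ s in Ioc (0:ℝ) r, s / φ s) / (c * (2 - β)) := by
    calc (∫ s in Ioc r T, s / φ s)
        ≤ r ^ β / (c * φ r) * (T ^ (2 - β) / (2 - β)) := htail r T hr hrT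
      _ = E * (r ^ β * r ^ (2 - β) / φ r) / (c * (2 - β)) := by
          rw [hT2β]; field_simp
      _ ≤ E * (M * ∫ s in Ioc (0:ℝ) r, s / φ s) / (c * (2 - β)) :=
          div_le_div_of_nonneg_right
            (mul_le_mul_of_nonneg_left (hJle r hr) hE0) (by positivity) |>.trans_eq rfl
  have e1 : (∫ s in Ioc (0:ℝ) r, s / φ s) ≤ E * ∫ s in Ioc (0:ℝ) r, s / φ s :=
    le_mul_of_one_le_left hIr0 hE1
  have e3 : (1 + M / (c * (2 - β))) * E * (∫ s in Ioc (0:ℝ) r, s / φ s)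
      = E * (∫ s in Ioc (0:ℝ) r, s / φ s)
        + E * (M * ∫ s in Ioc (0:ℝ) r, s / φ s) / (c * (2 - β)) := by
    field_simp
  rw [hsplit r T hr hrT]
  linarith
end

section
/- Let φ_j : (0,∞) → (0,∞) be strictly increasing and continuous with φ_j(1) = 1, and suppose: (i) there exist constants c, c' > 0 and 0 < β₁ ≤ β₂ < 2 with c (R/r)^{β₁} ≤ φ_j(R)/φ_j(r) ≤ c' (R/r)^{β₂} for all 0 < r ≤ R ≤ 1; (ii) there exist constants C, C' > 0 and 1 < β₁* ≤ β₂* < ∞ with C (R/r)^{β₁*} ≤ φ_j(R)/φ_j(r) ≤ C' (R/r)^{β₂*} for all 1 ≤ r ≤ R. Define Φ(r) = r²/(2 ∫₀^r s/φ_j(s) ds) for r > 0, and define φ_c(r) = r² for 0 < r ≤ 1 and φ_c(r) = Φ(r)/Φ(1) for r ≥ 1. Then there exist constants c₀ > 0 and β ∈ (1,2] such that c₀ (R/r)^{β} ≤ φ_c(R)/φ_c(r) ≤ (R/r)² for all 0 < r ≤ R. -/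
open MeasureTheory Set Real

set_option maxHeartbeats 1000000 in
/-- the function `φ_c` built from `Φ(r) = r²/(2∫₀^r s/φ_j(s) ds)` has
global two-sided scaling with lower index `β ∈ (1,2]` and upper index `2`. -/
theorem stmt_4 (φj : ℝ → ℝ) (hφjpos : ∀ r : ℝ, 0 < r → 0 < φj r)
    (hφjmono : StrictMonoOn φj (Ioi 0)) (hφjcont : ContinuousOn φj (Ioi 0))
    (hφjone : φj 1 = 1)
    (c c' β₁ β₂ : ℝ) (hc : 0 < c) (hc' : 0 < c')
    (hβ₁ : 0 < β₁) (hβ₁₂ : β₁ ≤ β₂) (hβ₂ : β₂ < 2)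
    (hscale₁ : ∀ r R : ℝ, 0 < r → r ≤ R → R ≤ 1 →
      c * (R / r) ^ β₁ ≤ φj R / φj r ∧ φj R / φj r ≤ c' * (R / r) ^ β₂)
    (C C' β₁' β₂' : ℝ) (hC : 0 < C) (hC' : 0 < C') (hβ₁' : 1 < β₁') (hβ₁₂' : β₁' ≤ β₂')
    (hscale₂ : ∀ r R : ℝ, 1 ≤ r → r ≤ R →
      C * (R / r) ^ β₁' ≤ φj R / φj r ∧ φj R / φj r ≤ C' * (R / r) ^ β₂')
    (Φ : ℝ → ℝ)
    (hΦ : ∀ r : ℝ, 0 < r → Φ r = r ^ 2 / (2 * ∫ s in Ioc (0 : ℝ) r, s / φj s))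
    (φc : ℝ → ℝ)
    (hφc₁ : ∀ r : ℝ, 0 < r → r ≤ 1 → φc r = r ^ 2)
    (hφc₂ : ∀ r : ℝ, 1 ≤ r → φc r = Φ r / Φ 1) :
    ∃ c₀ β : ℝ, 0 < c₀ ∧ 1 < β ∧ β ≤ 2 ∧
      ∀ r R : ℝ, 0 < r → r ≤ R →
        c₀ * (R / r) ^ β ≤ φc R / φc r ∧ φc R / φc r ≤ (R / r) ^ 2 := by
  -- the exponent we will use
  set β : ℝ := min β₁' (3/2) with hβdef
  have hβgt1 : 1 < β := lt_min hβ₁' (by norm_num)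
  have hβlt2 : β < 2 := lt_of_le_of_lt (min_le_right _ _) (by norm_num)
  have hβle : β ≤ β₁' := min_le_left _ _
  have h2β : (0:ℝ) < 2 - β := by linarith
  set f : ℝ → ℝ := fun s => s / φj s with hfdef
  have hfcont : ContinuousOn f (Ioi 0) :=
    continuousOn_id.div hφjcont fun x hx => (hφjpos x hx).ne'
  -- integrability on (0,1]
  have hint1 : IntegrableOn f (Ioc 0 1) := by
    have hg : IntegrableOn (fun s : ℝ => c' * s ^ (1 - β₂)) (Ioc 0 1) :=
      ((intervalIntegrable_iff_integrableOn_Ioc_of_le zero_le_one).1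
        (intervalIntegral.intervalIntegrable_rpow' (by linarith))).const_mul c'
    refine hg.mono' ((hfcont.mono (fun x hx => hx.1)).aestronglyMeasurable measurableSet_Ioc) ?_
    filter_upwards [ae_restrict_mem measurableSet_Ioc] with s hs
    have hs0 : 0 < s := hs.1
    have hφs : 0 < φj s := hφjpos s hs0
    have h2 := (hscale₁ s 1 hs0 hs.2 le_rfl).2
    rw [hφjone, one_div, one_div, Real.inv_rpow hs0.le] at h2
    have h3 : s / φj s ≤ s * (c' * (s ^ β₂)⁻¹) := by
      rw [div_eq_mul_inv]
      exact mul_le_mul_of_nonneg_left h2 hs0.le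
    have h4 : s * (c' * (s ^ β₂)⁻¹) = c' * s ^ (1 - β₂) := by
      rw [Real.rpow_sub hs0, Real.rpow_one, div_eq_mul_inv]; ring
    rw [Real.norm_of_nonneg (div_nonneg hs0.le hφs.le)]
    calc s / φj s ≤ s * (c' * (s ^ β₂)⁻¹) := h3
      _ = c' * s ^ (1 - β₂) := h4
  -- integrability on any (a,b] with a > 0
  have hintIcc : ∀ a b : ℝ, 0 < a → IntegrableOn f (Ioc a b) := by
    intro a b ha
    refine ((hfcont.mono ?_).integrableOn_Icc).mono_set Ioc_subset_Icc_self
    intro x hx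
    exact lt_of_lt_of_le ha hx.1
  have hint : ∀ r : ℝ, 0 < r → IntegrableOn f (Ioc 0 r) := by
    intro r hr
    rcases le_or_gt r 1 with h | h
    · exact hint1.mono_set (Ioc_subset_Ioc le_rfl h)
    · rw [← Ioc_union_Ioc_eq_Ioc zero_le_one h.le]
      exact hint1.union (hintIcc 1 r one_pos)
  -- additivity
  have hadd : ∀ r R : ℝ, 0 < r → r ≤ R →
      (∫ s in Ioc (0:ℝ) R, f s) = (∫ s in Ioc (0:ℝ) r, f s) + ∫ s in Ioc r R, f s := by
    intro r R hr hrR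
    rw [← Ioc_union_Ioc_eq_Ioc hr.le hrR]
    exact setIntegral_union (Ioc_disjoint_Ioc_of_le le_rfl) measurableSet_Ioc (hint r hr) (hintIcc r R hr)
  -- lower bound for the integral
  have hIlb : ∀ r : ℝ, 0 < r → r ^ 2 / (2 * φj r) ≤ ∫ s in Ioc (0:ℝ) r, f s := by
    intro r hr
    have hφr : 0 < φj r := hφjpos r hr
    have h1 : (∫ s in Ioc (0:ℝ) r, s / φj r) ≤ ∫ s in Ioc (0:ℝ) r, f s := by
      apply setIntegral_mono_on ?_ (hint r hr) measurableSet_Ioc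
      · intro s hs
        have hs0 : 0 < s := hs.1
        have hφs : 0 < φj s := hφjpos s hs0
        have hle : φj s ≤ φj r := by
          rcases eq_or_lt_of_le hs.2 with h | h
          · rw [h]
          · exact (hφjmono hs.1 (mem_Ioi.2 hr) h).le
        exact div_le_div_of_nonneg_left hs0.le hφs hle
      · have : IntervalIntegrable (fun s : ℝ => s) volume 0 r :=
          intervalIntegral.intervalIntegrable_id
        exact (((intervalIntegrable_iff_integrableOn_Ioc_of_le hr.le).1 this)).div_const (φj r)
    have h2 : (∫ s in Ioc (0:ℝ) r, s / φj r) = r ^ 2 / (2 * φj r) := by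
      rw [integral_div, ← intervalIntegral.integral_of_le hr.le]
      simp only [integral_id]
      ring
    linarith
  have hIpos : ∀ r : ℝ, 0 < r → 0 < ∫ s in Ioc (0:ℝ) r, f s := by
    intro r hr
    have := hIlb r hr
    have hφr : 0 < φj r := hφjpos r hr
    have : 0 < r ^ 2 / (2 * φj r) := by positivity
    linarith [hIlb r hr]
  -- constants
  set K : ℝ := 1 + 2 / (C * (2 - β)) with hKdef
  have hKgt1 : 1 < K := by
    have h : 0 < 2 / (C * (2 - β)) := div_pos (by norm_num) (mul_pos hC h2β)
    rw [hKdef]; linarith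
  have hKpos : 0 < K := lt_trans one_pos hKgt1
  -- the key growth estimate: for 1 ≤ r ≤ R,  I R ≤ K * (R/r)^(2-β) * I r
  have hupper : ∀ r R : ℝ, 1 ≤ r → r ≤ R →
      (∫ s in Ioc (0:ℝ) R, f s) ≤ K * (R / r) ^ (2 - β) * ∫ s in Ioc (0:ℝ) r, f s := by
    intro r R hr hrR
    have hr0 : (0:ℝ) < r := lt_of_lt_of_le one_pos hr
    have hR0 : (0:ℝ) < R := lt_of_lt_of_le hr0 hrR
    have hφr : 0 < φj r := hφjpos r hr0
    have hx1 : (1:ℝ) ≤ R / r := (one_le_div hr0).2 hrR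
    have hx0 : (0:ℝ) < R / r := div_pos hR0 hr0
    -- pointwise bound on (r, R]
    have hpt : ∀ s ∈ Ioc r R, f s ≤ r ^ β / (C * φj r) * s ^ (1 - β) := by
      intro s hs
      have hs0 : 0 < s := lt_trans hr0 hs.1
      have hφs : 0 < φj s := hφjpos s hs0
      have hsr : (1:ℝ) ≤ s / r := (one_le_div hr0).2 hs.1.le
      have h1 := (hscale₂ r s hr hs.1.le).1
      have h2 : (s / r) ^ β ≤ (s / r) ^ β₁' := rpow_le_rpow_of_exponent_le hsr hβle
      have h3 : C * (s / r) ^ β ≤ φj s / φj r := le_trans (by nlinarith) h1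
      have h4 : C * φj r * (s / r) ^ β ≤ φj s := by
        rw [le_div_iff₀ hφr] at h3
        calc C * φj r * (s / r) ^ β = C * (s / r) ^ β * φj r := by ring
          _ ≤ φj s := h3
      have hden : 0 < C * φj r * (s / r) ^ β := by positivity
      have h5 : f s ≤ s / (C * φj r * (s / r) ^ β) :=
        div_le_div_of_nonneg_left hs0.le hden h4
      have h6 : s / (C * φj r * (s / r) ^ β) = r ^ β / (C * φj r) * s ^ (1 - β) := by
        rw [Real.div_rpow hs0.le hr0.le, Real.rpow_sub hs0, Real.rpow_one]
        have hsb : (0:ℝ) < s ^ β := rpow_pos_of_pos hs0 β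
        have hrb : (0:ℝ) < r ^ β := rpow_pos_of_pos hr0 β
        field_simp
      linarith [h6 ▸ h5]
    -- integral bound on (r, R]
    have hrint : IntegrableOn (fun s : ℝ => r ^ β / (C * φj r) * s ^ (1 - β)) (Ioc r R) :=
      (((intervalIntegrable_iff_integrableOn_Ioc_of_le hrR).1
        (intervalIntegral.intervalIntegrable_rpow' (by linarith)))).const_mul _
    have hmid : (∫ s in Ioc r R, f s) ≤
        r ^ β / (C * φj r) * ((R ^ (2 - β) - r ^ (2 - β)) / (2 - β)) := by
      have h1 := setIntegral_mono_on (hintIcc r R hr0) hrint measurableSet_Ioc hpt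
      have h2 : (∫ s in Ioc r R, r ^ β / (C * φj r) * s ^ (1 - β)) =
          r ^ β / (C * φj r) * ((R ^ (2 - β) - r ^ (2 - β)) / (2 - β)) := by
        rw [MeasureTheory.integral_const_mul, ← intervalIntegral.integral_of_le hrR,
          integral_rpow (Or.inl (by linarith))]
        have he : (1:ℝ) - β + 1 = 2 - β := by ring
        rw [he]
      linarith [h2 ▸ h1]
    -- the rest is algebra
    have hIr := hIlb r hr0
    have hIrpos := hIpos r hr0
    have hRb : R ^ (2 - β) = (R / r) ^ (2 - β) * r ^ (2 - β) := by
      rw [Real.div_rpow hR0.le hr0.le]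
      field_simp
    have hrr : r ^ β * r ^ (2 - β) = r ^ 2 := by
      rw [← Real.rpow_add hr0]
      norm_num
    have hmid2 : (∫ s in Ioc r R, f s) ≤
        (R / r) ^ (2 - β) * (2 / (C * (2 - β))) * (r ^ 2 / (2 * φj r)) := by
      have : r ^ β / (C * φj r) * ((R ^ (2 - β) - r ^ (2 - β)) / (2 - β)) ≤
          (R / r) ^ (2 - β) * (2 / (C * (2 - β))) * (r ^ 2 / (2 * φj r)) := by
        rw [hRb]
        have hrb2 : (0:ℝ) ≤ r ^ (2 - β) := (rpow_pos_of_pos hr0 _).le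
        have heq : (R / r) ^ (2 - β) * (2 / (C * (2 - β))) * (r ^ 2 / (2 * φj r)) =
            r ^ β / (C * φj r) * ((R / r) ^ (2 - β) * r ^ (2 - β) / (2 - β)) := by
          rw [← hrr]
          field_simp
        rw [heq]
        apply mul_le_mul_of_nonneg_left _ (by positivity)
        apply div_le_div_of_nonneg_right _ (by linarith)
        linarith
      linarith [hmid]
    have hx2 : (1:ℝ) ≤ (R / r) ^ (2 - β) := one_le_rpow hx1 (by linarith)
    have hIR := hadd r R hr0 hrR
    have hIm : (∫ s in Ioc r R, f s) ≤ (R / r) ^ (2 - β) * (2 / (C * (2 - β))) *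
        (∫ s in Ioc (0:ℝ) r, f s) := by
      have h0 : (0:ℝ) ≤ (R / r) ^ (2 - β) * (2 / (C * (2 - β))) := by positivity
      nlinarith [hIr, hmid2]
    rw [hIR, hKdef]
    nlinarith [hIrpos, hx2, hIm]
  -- upper monotonicity
  have hImono : ∀ r R : ℝ, 0 < r → r ≤ R → (∫ s in Ioc (0:ℝ) r, f s) ≤ ∫ s in Ioc (0:ℝ) R, f s := by
    intro r R hr hrR
    rw [hadd r R hr hrR]
    have : 0 ≤ ∫ s in Ioc r R, f s := by
      apply setIntegral_nonneg measurableSet_Ioc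
      intro s hs
      exact div_nonneg (lt_trans hr hs.1).le (hφjpos s (lt_trans hr hs.1)).le
    linarith
  -- positivity of Φ 1
  have hI1pos : 0 < ∫ s in Ioc (0:ℝ) 1, f s := hIpos 1 one_pos
  have hΦ1 : Φ 1 = 1 / (2 * ∫ s in Ioc (0:ℝ) 1, f s) := by
    rw [hΦ 1 one_pos]; norm_num
  have hΦ1pos : 0 < Φ 1 := by rw [hΦ1]; positivity
  -- ratio formula for 1 ≤ r
  have hratio : ∀ r R : ℝ, 1 ≤ r → r ≤ R → φc R / φc r =
      R ^ 2 * (∫ s in Ioc (0:ℝ) r, f s) / (r ^ 2 * ∫ s in Ioc (0:ℝ) R, f s) := by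
    intro r R hr hrR
    have hr0 : (0:ℝ) < r := lt_of_lt_of_le one_pos hr
    have hR0 : (0:ℝ) < R := lt_of_lt_of_le hr0 hrR
    have hIrpos := hIpos r hr0
    have hIRpos := hIpos R hR0
    rw [hφc₂ r hr, hφc₂ R (le_trans hr hrR), hΦ r hr0, hΦ R hR0]
    field_simp
  refine ⟨K⁻¹, β, inv_pos.2 hKpos, hβgt1, hβlt2.le, ?_⟩
  intro r R hr hrR
  have hR0 : (0:ℝ) < R := lt_of_lt_of_le hr hrR
  have hx1 : (1:ℝ) ≤ R / r := (one_le_div hr).2 hrR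
  have hx0 : (0:ℝ) < R / r := div_pos hR0 hr
  have hKinv1 : K⁻¹ ≤ 1 := by
    rw [inv_le_one_iff₀]; right; exact hKgt1.le
  have hxb2 : (R / r) ^ β ≤ (R / r) ^ (2:ℝ) := rpow_le_rpow_of_exponent_le hx1 (by linarith)
  have hx2eq : (R / r) ^ (2:ℝ) = (R / r) ^ (2:ℕ) := by
    rw [← Real.rpow_natCast (R / r) 2]; norm_num
  rcases le_or_gt R 1 with hR1 | hR1
  · -- both ≤ 1
    rw [hφc₁ r hr (le_trans hrR hR1), hφc₁ R hR0 hR1]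
    constructor
    · calc K⁻¹ * (R / r) ^ β ≤ 1 * (R / r) ^ β := by
            apply mul_le_mul_of_nonneg_right hKinv1 (rpow_pos_of_pos hx0 β).le
        _ = (R / r) ^ β := one_mul _
        _ ≤ (R / r) ^ (2:ℝ) := hxb2
        _ = (R / r) ^ (2:ℕ) := hx2eq
        _ = R ^ 2 / r ^ 2 := div_pow R r 2
    · rw [div_pow]
  rcases le_or_gt 1 r with hr1 | hr1
  · -- 1 ≤ r ≤ R
    have hr0 : (0:ℝ) < r := hr
    have hIrpos := hIpos r hr0
    have hIRpos := hIpos R hR0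
    have hup := hupper r R hr1 hrR
    have h5 : K⁻¹ * (∫ s in Ioc (0:ℝ) R, f s) ≤
        (R / r) ^ (2 - β) * ∫ s in Ioc (0:ℝ) r, f s := by
      have h := mul_le_mul_of_nonneg_left hup (inv_pos.2 hKpos).le
      rwa [← mul_assoc, ← mul_assoc, inv_mul_cancel₀ hKpos.ne', one_mul] at h
    rw [hratio r R hr1 hrR]
    constructor
    · rw [le_div_iff₀ (by positivity)]
      calc K⁻¹ * (R / r) ^ β * (r ^ 2 * ∫ s in Ioc (0:ℝ) R, f s)
          = ((R / r) ^ β * r ^ 2) * (K⁻¹ * ∫ s in Ioc (0:ℝ) R, f s) := by ring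
        _ ≤ ((R / r) ^ β * r ^ 2) * ((R / r) ^ (2 - β) * ∫ s in Ioc (0:ℝ) r, f s) := by
            apply mul_le_mul_of_nonneg_left h5 (by positivity)
        _ = ((R / r) ^ β * (R / r) ^ (2 - β)) * (r ^ 2 * ∫ s in Ioc (0:ℝ) r, f s) := by ring
        _ = (R / r) ^ (2:ℝ) * (r ^ 2 * ∫ s in Ioc (0:ℝ) r, f s) := by
            rw [← Real.rpow_add hx0]; norm_num
        _ = (R / r) ^ (2:ℕ) * (r ^ 2 * ∫ s in Ioc (0:ℝ) r, f s) := by rw [hx2eq]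
        _ = R ^ 2 * ∫ s in Ioc (0:ℝ) r, f s := by
            rw [div_pow]; field_simp
    · rw [div_le_iff₀ (by positivity), div_pow]
      calc R ^ 2 * (∫ s in Ioc (0:ℝ) r, f s)
          ≤ R ^ 2 * ∫ s in Ioc (0:ℝ) R, f s := by
            apply mul_le_mul_of_nonneg_left (hImono r R hr0 hrR) (by positivity)
        _ = R ^ 2 / r ^ 2 * (r ^ 2 * ∫ s in Ioc (0:ℝ) R, f s) := by
            field_simp
  · -- r < 1 < R  (hR1 : 1 < R, hr1 : r < 1)
    have hIRpos := hIpos R hR0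
    have hup := hupper 1 R le_rfl hR1.le
    rw [div_one] at hup
    have h5 : K⁻¹ * (∫ s in Ioc (0:ℝ) R, f s) ≤
        R ^ (2 - β) * ∫ s in Ioc (0:ℝ) 1, f s := by
      have h := mul_le_mul_of_nonneg_left hup (inv_pos.2 hKpos).le
      rwa [← mul_assoc, ← mul_assoc, inv_mul_cancel₀ hKpos.ne', one_mul] at h
    have hval : φc R / φc r =
        R ^ 2 * (∫ s in Ioc (0:ℝ) 1, f s) / (r ^ 2 * ∫ s in Ioc (0:ℝ) R, f s) := by
      rw [hφc₁ r hr hr1.le, hφc₂ R hR1.le, hΦ R hR0, hΦ1]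
      field_simp
    rw [hval]
    constructor
    · rw [le_div_iff₀ (by positivity)]
      have h6 : (R / r) ^ β * r ^ 2 ≤ R ^ β := by
        rw [Real.div_rpow hR0.le hr.le, div_mul_eq_mul_div,
          div_le_iff₀ (rpow_pos_of_pos hr β)]
        apply mul_le_mul_of_nonneg_left _ (rpow_pos_of_pos hR0 β).le
        rw [← Real.rpow_natCast r 2]
        exact rpow_le_rpow_of_exponent_ge hr hr1.le (by push_cast; linarith)
      have h7 : R ^ β * R ^ (2 - β) = R ^ 2 := by
        rw [← Real.rpow_add hR0]; norm_num
      calc K⁻¹ * (R / r) ^ β * (r ^ 2 * ∫ s in Ioc (0:ℝ) R, f s)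
          = ((R / r) ^ β * r ^ 2) * (K⁻¹ * ∫ s in Ioc (0:ℝ) R, f s) := by ring
        _ ≤ ((R / r) ^ β * r ^ 2) * (R ^ (2 - β) * ∫ s in Ioc (0:ℝ) 1, f s) := by
            apply mul_le_mul_of_nonneg_left h5 (by positivity)
        _ = ((R / r) ^ β * r ^ 2 * R ^ (2 - β)) * ∫ s in Ioc (0:ℝ) 1, f s := by ring
        _ ≤ (R ^ β * R ^ (2 - β)) * ∫ s in Ioc (0:ℝ) 1, f s := by
            apply mul_le_mul_of_nonneg_right _ hI1pos.le
            exact mul_le_mul_of_nonneg_right h6 (rpow_pos_of_pos hR0 _).le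
        _ = R ^ 2 * ∫ s in Ioc (0:ℝ) 1, f s := by rw [h7]
    · rw [div_le_iff₀ (by positivity), div_pow]
      calc R ^ 2 * (∫ s in Ioc (0:ℝ) 1, f s)
          ≤ R ^ 2 * ∫ s in Ioc (0:ℝ) R, f s := by
            apply mul_le_mul_of_nonneg_left (hImono 1 R one_pos hR1.le) (by positivity)
        _ = R ^ 2 / r ^ 2 * (r ^ 2 * ∫ s in Ioc (0:ℝ) R, f s) := by
            field_simp
end

section
/- Let (M,d) be a metric space and μ a Borel measure on M such that V(x,r) := μ(B(x,r)) is finite and strictly positive for all x ∈ M and r > 0, and suppose there exist constants C_μ > 0 and d₂ > 0 such that V(x,R)/V(x,r) ≤ C_μ (R/r)^{d₂} for all x ∈ M and 0 < r ≤ R. Let φ : (0,∞) → (0,∞) be nondecreasing and suppose there exist constants c₁ > 0 and β₁ > 0 with φ(R)/φ(r) ≥ c₁ (R/r)^{β₁} for all 0 < r ≤ R. Let J : M × M → [0,∞) be measurable with J(x,y) ≤ C₀ / (V(x, d(x,y)) · φ(d(x,y))) for all x ≠ y, for some constant C₀ > 0. Then there exists a constant c > 0 such that for every x ∈ M and r >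 0, ∫_{M ∖ B(x,r)} J(x,y) dμ(y) ≤ c / φ(r). -/
open MeasureTheory Set Real Metric

/-- under volume doubling, a jumping kernel bounded above by
`C₀/(V(x,d(x,y)) φ(d(x,y)))` has tails `∫_{B(x,r)ᶜ} J(x,·) dμ ≤ c/φ(r)`. -/
theorem stmt_6 {M : Type*} [MetricSpace M] [MeasurableSpace M] [BorelSpace M]
    (μ : Measure M) (V : M → ℝ → ℝ)
    (hV : ∀ x r, V x r = (μ (ball x r)).toReal)
    (hfin : ∀ (x : M) (r : ℝ), 0 < r → μ (ball x r) < ⊤)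
    (hpos : ∀ (x : M) (r : ℝ), 0 < r → 0 < μ (ball x r))
    (Cμ d₂ : ℝ) (hCμ : 0 < Cμ) (hd₂ : 0 < d₂)
    (hVD : ∀ (x : M) (r R : ℝ), 0 < r → r ≤ R → V x R / V x r ≤ Cμ * (R / r) ^ d₂)
    (φ : ℝ → ℝ) (hφpos : ∀ r : ℝ, 0 < r → 0 < φ r)
    (hφmono : ∀ r R : ℝ, 0 < r → r ≤ R → φ r ≤ φ R)
    (c₁ β₁ : ℝ) (hc₁ : 0 < c₁) (hβ₁ : 0 < β₁)
    (hφscale : ∀ r R : ℝ, 0 < r → r ≤ R → c₁ * (R / r) ^ β₁ ≤ φ R / φ r)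
    (J : M → M → ℝ) (hJmeas : Measurable (Function.uncurry J))
    (hJnonneg : ∀ x y, 0 ≤ J x y)
    (C₀ : ℝ) (hC₀ : 0 < C₀)
    (hJ : ∀ x y : M, x ≠ y → J x y ≤ C₀ / (V x (dist x y) * φ (dist x y))) :
    ∃ c : ℝ, 0 < c ∧ ∀ (x : M) (r : ℝ), 0 < r →
      (∫ y in (ball x r)ᶜ, J x y ∂μ) ≤ c / φ r := by
  -- auxiliary positivity/monotonicity facts
  have hVpos : ∀ (x : M) (s : ℝ), 0 < s → 0 < V x s := fun x s hs => by
    rw [hV]; exact ENNReal.toReal_pos (hpos x s hs).ne' (hfin x s hs).ne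
  have hVmono : ∀ (x : M) (s t : ℝ), 0 < s → s ≤ t → V x s ≤ V x t := fun x s t hs hst => by
    rw [hV, hV]
    exact ENNReal.toReal_mono (hfin x t (hs.trans_le hst)).ne
      (measure_mono (ball_subset_ball hst))
  set q : ℝ := (2 : ℝ) ^ (-β₁) with hqdef
  have hq0 : 0 < q := Real.rpow_pos_of_pos two_pos _
  have hq1 : q < 1 := Real.rpow_lt_one_of_one_lt_of_neg one_lt_two (neg_neg_of_pos hβ₁)
  have h1q : 0 < 1 - q := by linarith
  have h2d : (0 : ℝ) < (2 : ℝ) ^ d₂ := Real.rpow_pos_of_pos two_pos _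
  have h2b : (0 : ℝ) < (2 : ℝ) ^ β₁ := Real.rpow_pos_of_pos two_pos _
  refine ⟨C₀ * Cμ * (2 : ℝ) ^ d₂ / c₁ * (1 - q)⁻¹, by positivity, fun x r hr => ?_⟩
  set c : ℝ := C₀ * Cμ * (2 : ℝ) ^ d₂ / c₁ * (1 - q)⁻¹ with hcdef
  have hφr : 0 < φ r := hφpos r hr
  -- the radii 2^n r
  set s : ℕ → ℝ := fun n => 2 ^ n * r with hsdef
  have hs0 : ∀ n, 0 < s n := fun n => by positivity
  have hsmono : ∀ n, s n ≤ s (n + 1) := fun n => by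
    have h1 : (2 : ℝ) ^ n ≤ 2 ^ (n + 1) :=
      pow_le_pow_right₀ (by norm_num) (Nat.le_succ n)
    exact mul_le_mul_of_nonneg_right h1 hr.le
  have hrs : ∀ n, r ≤ s n := fun n => by
    have h1 : (1 : ℝ) ≤ 2 ^ n := one_le_pow₀ (by norm_num)
    calc r = 1 * r := (one_mul r).symm
      _ ≤ 2 ^ n * r := mul_le_mul_of_nonneg_right h1 hr.le
  -- reduce to a lintegral bound
  have hmeas : Measurable (J x) := hJmeas.of_uncurry_left
  rw [MeasureTheory.integral_eq_lintegral_of_nonneg_ae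
      (Filter.Eventually.of_forall fun y => hJnonneg x y)
      hmeas.aestronglyMeasurable]
  have key : (∫⁻ y in (ball x r)ᶜ, ENNReal.ofReal (J x y) ∂μ) ≤ ENNReal.ofReal (c / φ r) := by
    -- cover by annuli
    have hcover : (ball x r)ᶜ ⊆ ⋃ n, (ball x (s (n + 1)) \ ball x (s n)) := by
      intro y hy
      simp only [mem_compl_iff, mem_ball, not_lt] at hy
      have hP : ∃ n, dist y x < s (n + 1) := by
        obtain ⟨n, hn⟩ := pow_unbounded_of_one_lt (dist y x / r) (one_lt_two (α := ℝ))
        refine ⟨n, ?_⟩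
        have : dist y x < 2 ^ n * r := by
          rw [div_lt_iff₀ hr] at hn; linarith [hn]
        exact this.trans_le (hsmono n)
      set n₀ := Nat.find hP with hn₀
      have hupper : dist y x < s (n₀ + 1) := Nat.find_spec hP
      have hlower : s n₀ ≤ dist y x := by
        rcases Nat.eq_zero_or_pos n₀ with h0 | hpos'
        · rw [h0]; simpa [hsdef] using hy
        · obtain ⟨m, hm⟩ := Nat.exists_eq_succ_of_ne_zero hpos'.ne'
          have hmin : ¬ dist y x < s (m + 1) :=
            Nat.find_min hP (show m < n₀ by omega)
          rw [hm]; exact not_lt.mp hmin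
      simp only [mem_iUnion, mem_diff, mem_ball, not_lt]
      exact ⟨n₀, hupper, hlower⟩
    calc (∫⁻ y in (ball x r)ᶜ, ENNReal.ofReal (J x y) ∂μ)
        ≤ ∫⁻ y in ⋃ n, (ball x (s (n + 1)) \ ball x (s n)), ENNReal.ofReal (J x y) ∂μ :=
          lintegral_mono_set hcover
      _ ≤ ∑' n, ∫⁻ y in ball x (s (n + 1)) \ ball x (s n), ENNReal.ofReal (J x y) ∂μ :=
          lintegral_iUnion_le _ _
      _ ≤ ∑' n, ENNReal.ofReal ((C₀ * Cμ * (2 : ℝ) ^ d₂ / (c₁ * φ r)) * q ^ n) := by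
          refine ENNReal.tsum_le_tsum fun n => ?_
          have hVn := hVpos x (s n) (hs0 n)
          have hφn := hφpos (s n) (hs0 n)
          have hK : (0 : ℝ) < C₀ / (V x (s n) * φ (s n)) := by positivity
          calc (∫⁻ y in ball x (s (n + 1)) \ ball x (s n), ENNReal.ofReal (J x y) ∂μ)
              ≤ ∫⁻ _ in ball x (s (n + 1)) \ ball x (s n),
                  ENNReal.ofReal (C₀ / (V x (s n) * φ (s n))) ∂μ := by
                refine setLIntegral_mono measurable_const fun y hy => ?_
                obtain ⟨_, hy2⟩ := hy
                simp only [mem_ball, not_lt] at hy2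
                have hd : s n ≤ dist x y := by rwa [dist_comm]
                have hd0 : 0 < dist x y := (hs0 n).trans_le hd
                have hne : x ≠ y := by
                  intro h; rw [h] at hd0; simp at hd0
                refine ENNReal.ofReal_le_ofReal ?_
                refine (hJ x y hne).trans ?_
                have hVd := hVpos x (dist x y) hd0
                have hφd := hφpos (dist x y) hd0
                gcongr
                · exact hVmono x (s n) (dist x y) (hs0 n) hd
                · exact hφmono (s n) (dist x y) (hs0 n) hd
            _ = ENNReal.ofReal (C₀ / (V x (s n) * φ (s n))) *
                  μ (ball x (s (n + 1)) \ ball x (s n)) := setLIntegral_const _ _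
            _ ≤ ENNReal.ofReal (C₀ / (V x (s n) * φ (s n))) * μ (ball x (s (n + 1))) :=
                mul_le_mul_right (measure_mono diff_subset) _
            _ = ENNReal.ofReal (C₀ / (V x (s n) * φ (s n)) * V x (s (n + 1))) := by
                have hball : μ (ball x (s (n + 1))) = ENNReal.ofReal (V x (s (n + 1))) := by
                  rw [hV, ENNReal.ofReal_toReal (hfin x (s (n + 1)) (hs0 (n + 1))).ne]
                rw [hball, ← ENNReal.ofReal_mul hK.le]
            _ ≤ ENNReal.ofReal ((C₀ * Cμ * (2 : ℝ) ^ d₂ / (c₁ * φ r)) * q ^ n) := by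
                refine ENNReal.ofReal_le_ofReal ?_
                have hVn1 : V x (s (n + 1)) ≤ Cμ * (2 : ℝ) ^ d₂ * V x (s n) := by
                  have h := hVD x (s n) (s (n + 1)) (hs0 n) (hsmono n)
                  have hratio : s (n + 1) / s n = 2 := by
                    field_simp [hsdef]; ring
                  rw [hratio] at h
                  rw [div_le_iff₀ hVn] at h
                  linarith
                have hφs : c₁ * ((2 : ℝ) ^ β₁) ^ n * φ r ≤ φ (s n) := by
                  have h := hφscale r (s n) hr (hrs n)
                  have hratio : s n / r = 2 ^ n := by field_simp; simp only [hsdef]; ring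
                  rw [hratio] at h
                  have hpow : ((2 : ℝ) ^ n : ℝ) ^ β₁ = ((2 : ℝ) ^ β₁) ^ n := by
                    rw [← Real.rpow_natCast (2 : ℝ) n, ← Real.rpow_natCast ((2:ℝ) ^ β₁) n,
                      ← Real.rpow_mul (by norm_num), ← Real.rpow_mul (by norm_num), mul_comm]
                  rw [hpow] at h
                  rw [le_div_iff₀ hφr] at h
                  linarith
                have hqn : q ^ n = (((2 : ℝ) ^ β₁) ^ n)⁻¹ := by
                  rw [hqdef, Real.rpow_neg (by norm_num), inv_pow]
                have hPn : (0 : ℝ) < ((2 : ℝ) ^ β₁) ^ n := pow_pos h2b n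
                rw [hqn]
                have step1 : C₀ / (V x (s n) * φ (s n)) * V x (s (n + 1)) ≤
                    C₀ * Cμ * (2 : ℝ) ^ d₂ / φ (s n) := by
                  rw [div_mul_eq_mul_div, div_le_div_iff₀ (by positivity) hφn]
                  have := mul_le_mul_of_nonneg_left hVn1 hC₀.le
                  nlinarith [mul_le_mul_of_nonneg_right this hφn.le, hVn, hφn]
                refine step1.trans ?_
                rw [← div_eq_mul_inv, div_div]
                gcongr
                · rw [show c₁ * φ r * ((2 : ℝ) ^ β₁) ^ n
                      = c₁ * ((2 : ℝ) ^ β₁) ^ n * φ r by ring]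
                  exact hφs
      _ = ENNReal.ofReal (C₀ * Cμ * (2 : ℝ) ^ d₂ / (c₁ * φ r)) *
            ∑' n, (ENNReal.ofReal q) ^ n := by
          simp_rw [ENNReal.ofReal_mul (by positivity : (0:ℝ) ≤ C₀ * Cμ * (2:ℝ) ^ d₂ / (c₁ * φ r)),
            ENNReal.ofReal_pow hq0.le, ENNReal.tsum_mul_left]
      _ = ENNReal.ofReal (C₀ * Cμ * (2 : ℝ) ^ d₂ / (c₁ * φ r)) * (1 - ENNReal.ofReal q)⁻¹ := by
          rw [ENNReal.tsum_geometric]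
      _ = ENNReal.ofReal (c / φ r) := by
          rw [show (1 : ENNReal) - ENNReal.ofReal q = ENNReal.ofReal (1 - q) by
              rw [ENNReal.ofReal_sub 1 hq0.le, ENNReal.ofReal_one],
            ← ENNReal.ofReal_inv_of_pos h1q, ← ENNReal.ofReal_mul (by positivity)]
          congr 1
          rw [hcdef]
          field_simp
  calc (∫⁻ y in (ball x r)ᶜ, ENNReal.ofReal (J x y) ∂μ).toReal
      ≤ (ENNReal.ofReal (c / φ r)).toReal :=
        ENNReal.toReal_mono ENNReal.ofReal_ne_top key
    _ ≤ c / φ r := (ENNReal.toReal_ofReal' (r := c / φ r)).le.trans (max_le le_rfl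
        (by positivity))
end

section
/- Let (M,d) be a metric space and μ a Borel measure on M such that V(x,r) := μ(B(x,r)) is finite and strictly positive for all x ∈ M and r > 0, and suppose there exist constants C_μ > 0 and d₂ > 0 such that V(x,R)/V(x,r) ≤ C_μ (R/r)^{d₂} for all x ∈ M and 0 < r ≤ R. Let φ_c : [0,∞) → [0,∞) be a strictly increasing continuous bijection satisfying c₁ (R/r)^{β₁} ≤ φ_c(R)/φ_c(r) ≤ c₂ (R/r)^{β₂} for all 0 < r ≤ R, with constants c₁, c₂ > 0 and 1 < β₁ ≤ β₂. Let ψ : [0,∞) → [0,∞) be a strictly increasing bijection with a^{-1} φ_c(r)/r ≤ ψ(r) ≤ a φ_c(r)/r for all r > 0, for some a ≥ 1. Let φ_j : (0,∞) → (0,∞) be nondecreasing with φ_j(R)/φ_j(r) ≥ c₃ (R/r)^{β₁'} for all 0 < r ≤ R, for some c₃, β₁' > 0. Fix t > 0 and suppose p : M × M → [0,∞) is measurable and satisfies, for all x ≠ y, p(x,y) ≤ A [ (1/V(x, φ_c^{-1}(t))) exp(- b d(x,y)/ψ^{-1}(t/d(x,y))) + t / (V(x, d(x,y)) φ_j(d(x,y)))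 ] for some constants A, b > 0. Then there exists a constant c > 0, depending only on the constants above (and not on t, r, x), such that for every r > 0 with φ_c(r) ≥ t and every x ∈ M, ∫_{M ∖ B(x,r)} p(x,y) dμ(y) ≤ c · t · (1/φ_c(r) + 1/φ_j(r)). -/
open MeasureTheory Set Real Metric

private lemma exp_neg_le_rpow_aux (p z : ℝ) (hp : 0 < p) (hz : 0 < z) :
    Real.exp (-z) ≤ (p / z) ^ p := by
  have h1 : z / p ≤ Real.exp (z / p) := by
    have := Real.add_one_le_exp (z / p)
    linarith
  have h2 : (z / p) ^ p ≤ Real.exp z := by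
    calc (z / p) ^ p ≤ (Real.exp (z / p)) ^ p :=
          Real.rpow_le_rpow (by positivity) h1 hp.le
      _ = Real.exp z := by
          rw [← Real.exp_mul, div_mul_cancel₀]
          exact hp.ne'
  have hzp : (0:ℝ) < (z / p) ^ p := Real.rpow_pos_of_pos (by positivity) p
  rw [Real.exp_neg]
  calc (Real.exp z)⁻¹ ≤ ((z / p) ^ p)⁻¹ := inv_anti₀ hzp h2
    _ = (p / z) ^ p := by
        rw [← Real.inv_rpow (by positivity), inv_div]

private lemma annulus_exists_aux (d r : ℝ) (hr : 0 < r) (hd : r ≤ d) :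
    ∃ k : ℕ, 2 ^ k * r ≤ d ∧ d < 2 ^ (k + 1) * r := by
  have hex : ∃ n : ℕ, d < 2 ^ (n + 1) * r := by
    obtain ⟨n, hn⟩ := pow_unbounded_of_one_lt (d / r) (by norm_num : (1:ℝ) < 2)
    refine ⟨n, ?_⟩
    rw [← div_lt_iff₀ hr]
    exact hn.trans_le (by apply pow_le_pow_right₀ (by norm_num); omega)
  classical
  set k := Nat.find hex with hkdef
  refine ⟨k, ?_, Nat.find_spec hex⟩
  rcases Nat.eq_zero_or_pos k with h0 | hpos
  · rw [h0]; simpa using hd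
  · have := Nat.find_min hex (m := k - 1) (by omega)
    push_neg at this
    have : 2 ^ (k - 1 + 1) * r ≤ d := this
    rwa [Nat.sub_add_cancel hpos] at this

private lemma exit_time_aux (φc ψ ψInv : ℝ → ℝ) (a c₁ c₂ β₁ β₂ : ℝ)
    (hc₁ : 0 < c₁) (hc₂ : 0 < c₂) (hβ₁ : 1 < β₁) (hβ₁₂ : β₁ ≤ β₂) (ha : 1 ≤ a)
    (hφcScale : ∀ r R : ℝ, 0 < r → r ≤ R →
      c₁ * (R / r) ^ β₁ ≤ φc R / φc r ∧ φc R / φc r ≤ c₂ * (R / r) ^ β₂)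
    (hφcpos : ∀ s : ℝ, 0 < s → 0 < φc s)
    (hψInv_pos : ∀ t : ℝ, 0 < t → 0 < ψInv t)
    (hψInv_right : ∀ t : ℝ, 0 ≤ t → ψ (ψInv t) = t)
    (hψcomp : ∀ r : ℝ, 0 < r → a⁻¹ * (φc r / r) ≤ ψ r ∧ ψ r ≤ a * (φc r / r))
    (s t : ℝ) (hs : 0 < s) (ht : 0 < t) (hts : t ≤ φc s) :
    min ((a * c₂) ^ (-(β₂ - 1)⁻¹)) ((c₁ / a) ^ ((β₁ - 1)⁻¹ + (β₂ - 1)⁻¹))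
      * (φc s / t) ^ ((β₂ - 1)⁻¹) ≤ s / ψInv (t / s) := by
  have ha0 : 0 < a := lt_of_lt_of_le one_pos ha
  have hβ₂1 : 1 < β₂ := lt_of_lt_of_le hβ₁ hβ₁₂
  set γ := (β₂ - 1)⁻¹ with hγdef
  have hγpos : 0 < γ := by rw [hγdef]; exact inv_pos.mpr (by linarith)
  set u := ψInv (t / s) with hudef
  have hts' : 0 < t / s := by positivity
  have hu : 0 < u := hψInv_pos _ hts'
  have hψu : ψ u = t / s := hψInv_right _ hts'.le
  have hφu : φc u ≤ a * t * u / s := by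
    have h := (hψcomp u hu).1
    rw [hψu] at h
    have h' : φc u / u ≤ a * (t / s) := by
      rw [inv_mul_le_iff₀ ha0] at h; exact h
    have := mul_le_mul_of_nonneg_right h' hu.le
    rw [div_mul_cancel₀ _ hu.ne'] at this
    calc φc u ≤ a * (t / s) * u := this
      _ = a * t * u / s := by ring
  have hφs : 0 < φc s := hφcpos s hs
  set X := φc s / t with hXdef
  have hX1 : 1 ≤ X := (one_le_div ht).mpr hts
  have hXpos : 0 < X := lt_of_lt_of_le one_pos hX1
  have hXγpos : 0 < X ^ γ := rpow_pos_of_pos hXpos _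
  rcases le_or_gt u s with hus | hsu
  · -- case u ≤ s
    have h2 := (hφcScale u s hu hus).2
    have hsu0 : 0 < s / u := by positivity
    have key : X ≤ a * c₂ * (s / u) ^ (β₂ - 1) := by
      have hφsle : φc s ≤ c₂ * (s / u) ^ β₂ * φc u := by
        rw [div_le_iff₀ (hφcpos u hu)] at h2; exact h2
      have h4 : φc s ≤ c₂ * (s / u) ^ β₂ * (a * t * u / s) :=
        hφsle.trans (mul_le_mul_of_nonneg_left hφu (by positivity))
      have hrw : c₂ * (s / u) ^ β₂ * (a * t * u / s)
          = a * c₂ * ((s / u) ^ (β₂ - 1) * ((s / u) * (u / s))) * t := by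
        rw [show β₂ = (β₂ - 1) + 1 by ring, rpow_add hsu0, rpow_one]
        field_simp
        ring
      have hone : s / u * (u / s) = 1 := by field_simp
      rw [hrw, hone, mul_one] at h4
      rw [hXdef, div_le_iff₀ ht]
      linarith
    have hmain : (X / (a * c₂)) ^ γ ≤ s / u := by
      have h3 : X / (a * c₂) ≤ (s / u) ^ (β₂ - 1) := by
        rw [div_le_iff₀ (by positivity)]; linarith [key]
      calc (X / (a * c₂)) ^ γ ≤ ((s / u) ^ (β₂ - 1)) ^ γ :=
            rpow_le_rpow (by positivity) h3 hγpos.le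
        _ = s / u := by
            rw [← rpow_mul hsu0.le, hγdef, mul_inv_cancel₀ (by linarith), rpow_one]
    calc min ((a * c₂) ^ (-γ)) ((c₁ / a) ^ ((β₁ - 1)⁻¹ + γ)) * X ^ γ
        ≤ (a * c₂) ^ (-γ) * X ^ γ :=
          mul_le_mul_of_nonneg_right (min_le_left _ _) hXγpos.le
      _ = (X / (a * c₂)) ^ γ := by
          rw [div_rpow hXpos.le (by positivity), rpow_neg (by positivity)]
          ring
      _ ≤ s / u := hmain
  · -- case s < u
    have h1 := (hφcScale s u hs hsu.le).1
    have hβ₁1 : (0:ℝ) < β₁ - 1 := by linarith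
    have hus0 : 0 < u / s := by positivity
    have hus1 : 1 < u / s := (one_lt_div hs).mpr hsu
    have key : (u / s) ^ (β₁ - 1) ≤ a / (c₁ * X) := by
      have hφule : c₁ * (u / s) ^ β₁ * φc s ≤ φc u := by
        rw [le_div_iff₀ hφs] at h1; exact h1
      have h4 : c₁ * (u / s) ^ β₁ * φc s ≤ a * t * (u / s) := by
        calc c₁ * (u / s) ^ β₁ * φc s ≤ a * t * u / s := hφule.trans hφu
          _ = a * t * (u / s) := by ring
      have hrw : c₁ * (u / s) ^ β₁ * φc s
          = (c₁ * (u / s) ^ (β₁ - 1) * φc s) * (u / s) := by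
        rw [show β₁ = (β₁ - 1) + 1 by ring, rpow_add hus0, rpow_one]
        ring
      rw [hrw] at h4
      have h5 : c₁ * (u / s) ^ (β₁ - 1) * φc s ≤ a * t :=
        le_of_mul_le_mul_right h4 hus0
      rw [hXdef, le_div_iff₀ (by positivity)]
      have heq : (u / s) ^ (β₁ - 1) * (c₁ * (φc s / t)) = (c₁ * (u / s) ^ (β₁ - 1) * φc s) / t := by
        field_simp
      rw [heq, div_le_iff₀ ht]
      nlinarith [h5]
    have hXa : X < a / c₁ := by
      have h6 : (1:ℝ) < (u / s) ^ (β₁ - 1) := one_lt_rpow_iff_of_pos hus0 |>.mpr (Or.inl ⟨hus1, hβ₁1⟩)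
      have : (1:ℝ) < a / (c₁ * X) := lt_of_lt_of_le h6 key
      rw [lt_div_iff₀ (by positivity)] at this
      rw [lt_div_iff₀ hc₁]
      linarith
    set e := (β₁ - 1)⁻¹ with hedef
    have hepos : 0 < e := by rw [hedef]; positivity
    have hmain : (c₁ / a) ^ e ≤ s / u := by
      have h7 : u / s ≤ (a / (c₁ * X)) ^ e := by
        calc u / s = ((u / s) ^ (β₁ - 1)) ^ e := by
              rw [← rpow_mul hus0.le, hedef, mul_inv_cancel₀ (by linarith), rpow_one]
          _ ≤ (a / (c₁ * X)) ^ e := rpow_le_rpow (by positivity) key hepos.le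
      have h8 : (a / (c₁ * X)) ^ e ≤ (a / c₁) ^ e := by
        apply rpow_le_rpow (by positivity) ?_ hepos.le
        apply div_le_div_of_nonneg_left ha0.le (by positivity)
        calc c₁ = c₁ * 1 := by ring
          _ ≤ c₁ * X := by nlinarith
      have h9 : u / s ≤ (a / c₁) ^ e := h7.trans h8
      have h10 : (c₁ / a) ^ e = ((a / c₁) ^ e)⁻¹ := by
        rw [← inv_rpow (by positivity), inv_div]
      rw [h10, le_div_iff₀ hu]
      calc ((a / c₁) ^ e)⁻¹ * u ≤ ((a / c₁) ^ e)⁻¹ * ((a / c₁) ^ e * s) :=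
            mul_le_mul_of_nonneg_left ((div_le_iff₀ hs).mp h9) (by positivity)
        _ = s := by rw [← mul_assoc, inv_mul_cancel₀ (by positivity), one_mul]
    calc min ((a * c₂) ^ (-γ)) ((c₁ / a) ^ (e + γ)) * X ^ γ
        ≤ (c₁ / a) ^ (e + γ) * X ^ γ :=
          mul_le_mul_of_nonneg_right (min_le_right _ _) hXγpos.le
      _ = (c₁ / a) ^ e * ((c₁ / a) ^ γ * X ^ γ) := by
          rw [rpow_add (by positivity)]; ring
      _ ≤ (c₁ / a) ^ e * ((c₁ / a) ^ γ * (a / c₁) ^ γ) := by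
          apply mul_le_mul_of_nonneg_left ?_ (by positivity)
          apply mul_le_mul_of_nonneg_left ?_ (by positivity)
          exact rpow_le_rpow hXpos.le hXa.le hγpos.le
      _ = (c₁ / a) ^ e := by
          rw [← mul_rpow (by positivity) (by positivity)]
          rw [div_mul_div_comm, mul_comm c₁ a, div_self (by positivity), one_rpow, mul_one]
      _ ≤ s / u := hmain

set_option maxHeartbeats 1000000 in
/-- tail estimate `∫_{B(x,r)ᶜ} p(x,y) μ(dy) ≤ c t (1/φ_c(r) + 1/φ_j(r))`
for a kernel `p` dominated by the mixed (sub-Gaussian + jump) bound, when `φ_c(r) ≥ t`. -/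
theorem stmt_9 {M : Type*} [MetricSpace M] [MeasurableSpace M] [BorelSpace M]
    (μ : Measure M) (V : M → ℝ → ℝ)
    (hV : ∀ x r, V x r = (μ (ball x r)).toReal)
    (hfin : ∀ (x : M) (r : ℝ), 0 < r → μ (ball x r) < ⊤)
    (hpos : ∀ (x : M) (r : ℝ), 0 < r → 0 < μ (ball x r))
    (Cμ d₂ : ℝ) (hCμ : 0 < Cμ) (hd₂ : 0 < d₂)
    (hVD : ∀ (x : M) (r R : ℝ), 0 < r → r ≤ R → V x R / V x r ≤ Cμ * (R / r) ^ d₂)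
    -- the scale function φ_c, a strictly increasing continuous bijection of [0,∞)
    (φc φcInv : ℝ → ℝ) (hφc0 : φc 0 = 0)
    (hφcMono : StrictMonoOn φc (Ici 0)) (hφcCont : ContinuousOn φc (Ici 0))
    (hφcInv_nonneg : ∀ t : ℝ, 0 ≤ t → 0 ≤ φcInv t)
    (hφcInv_left : ∀ r : ℝ, 0 ≤ r → φcInv (φc r) = r)
    (hφcInv_right : ∀ t : ℝ, 0 ≤ t → φc (φcInv t) = t)
    (c₁ c₂ β₁ β₂ : ℝ) (hc₁ : 0 < c₁) (hc₂ : 0 < c₂) (hβ₁ : 1 < β₁) (hβ₁₂ : β₁ ≤ β₂)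
    (hφcScale : ∀ r R : ℝ, 0 < r → r ≤ R →
      c₁ * (R / r) ^ β₁ ≤ φc R / φc r ∧ φc R / φc r ≤ c₂ * (R / r) ^ β₂)
    -- ψ, a strictly increasing bijection of [0,∞) comparable to φ_c(r)/r
    (ψ ψInv : ℝ → ℝ) (a : ℝ) (ha : 1 ≤ a)
    (hψ0 : ψ 0 = 0) (hψMono : StrictMonoOn ψ (Ici 0))
    (hψInv_nonneg : ∀ t : ℝ, 0 ≤ t → 0 ≤ ψInv t)
    (hψInv_left : ∀ r : ℝ, 0 ≤ r → ψInv (ψ r) = r)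
    (hψInv_right : ∀ t : ℝ, 0 ≤ t → ψ (ψInv t) = t)
    (hψcomp : ∀ r : ℝ, 0 < r → a⁻¹ * (φc r / r) ≤ ψ r ∧ ψ r ≤ a * (φc r / r))
    -- the jump scale function φ_j, nondecreasing with a lower scaling bound
    (φj : ℝ → ℝ) (hφjpos : ∀ r : ℝ, 0 < r → 0 < φj r)
    (hφjmono : ∀ r R : ℝ, 0 < r → r ≤ R → φj r ≤ φj R)
    (c₃ β₁' : ℝ) (hc₃ : 0 < c₃) (hβ₁' : 0 < β₁')
    (hφjscale : ∀ r R : ℝ, 0 < r → r ≤ R → c₃ * (R / r) ^ β₁' ≤ φj R / φj r)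
    (A b : ℝ) (hA : 0 < A) (hb : 0 < b) :
    ∃ c : ℝ, 0 < c ∧ ∀ t : ℝ, 0 < t → ∀ p : M → M → ℝ,
      Measurable (Function.uncurry p) → (∀ x y, 0 ≤ p x y) →
      (∀ x y : M, x ≠ y → p x y ≤
        A * ((1 / V x (φcInv t)) * Real.exp (-(b * dist x y / ψInv (t / dist x y))) +
          t / (V x (dist x y) * φj (dist x y)))) →
      ∀ r : ℝ, 0 < r → t ≤ φc r → ∀ x : M,
        (∫ y in (ball x r)ᶜ, p x y ∂μ) ≤ c * t * (1 / φc r + 1 / φj r) := by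
  have hβ₂1 : 1 < β₂ := lt_of_lt_of_le hβ₁ hβ₁₂
  have ha0 : 0 < a := lt_of_lt_of_le one_pos ha
  set γ := (β₂ - 1)⁻¹ with hγdef
  have hγpos : 0 < γ := by rw [hγdef]; exact inv_pos.mpr (by linarith)
  set κ := min ((a * c₂) ^ (-γ)) ((c₁ / a) ^ ((β₁ - 1)⁻¹ + γ)) with hκdef
  have hκpos : 0 < κ :=
    lt_min (Real.rpow_pos_of_pos (by positivity) _) (Real.rpow_pos_of_pos (by positivity) _)
  set q : ℝ := d₂ + 2 with hqdef
  have hqpos : 0 < q := by rw [hqdef]; linarith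
  set pp := (β₂ - 1) * q with hppdef
  have hpppos : 0 < pp := by rw [hppdef]; exact mul_pos (by linarith) hqpos
  have hγpp : γ * pp = q := by
    rw [hγdef, hppdef, ← mul_assoc, inv_mul_cancel₀ (by linarith), one_mul]
  set Cp := (pp / (b * κ)) ^ pp with hCpdef
  have hCppos : 0 < Cp := Real.rpow_pos_of_pos (by positivity) _
  set e := β₁⁻¹ * d₂ with hedef
  have hepos : 0 < e := by rw [hedef]; positivity
  have hβ₁inv : β₁⁻¹ ≤ 1 := by
    rw [show (1:ℝ) = 1⁻¹ by norm_num]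
    exact inv_anti₀ one_pos hβ₁.le
  have heled : e ≤ d₂ := by
    rw [hedef]
    calc β₁⁻¹ * d₂ ≤ 1 * d₂ := mul_le_mul_of_nonneg_right hβ₁inv hd₂.le
      _ = d₂ := one_mul d₂
  set KG := Cμ * (2:ℝ) ^ d₂ * Cp * c₁ ^ (-q) / c₁ ^ e with hKGdef
  have hKGpos : 0 < KG := by
    rw [hKGdef]
    have h1 : (0:ℝ) < (2:ℝ) ^ d₂ := Real.rpow_pos_of_pos two_pos _
    have h2 : (0:ℝ) < c₁ ^ (-q) := Real.rpow_pos_of_pos hc₁ _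
    have h3 : (0:ℝ) < c₁ ^ e := Real.rpow_pos_of_pos hc₁ _
    positivity
  set KJ := Cμ * (2:ℝ) ^ d₂ / c₃ with hKJdef
  have hKJpos : 0 < KJ := by
    rw [hKJdef]
    have h1 : (0:ℝ) < (2:ℝ) ^ d₂ := Real.rpow_pos_of_pos two_pos _
    positivity
  set wJ := (2:ℝ) ^ (-β₁') with hwJdef
  have hwJpos : 0 < wJ := Real.rpow_pos_of_pos two_pos _
  have hwJlt : wJ < 1 := by
    rw [hwJdef]
    exact Real.rpow_lt_one_of_one_lt_of_neg one_lt_two (by linarith)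
  have hwJinv : 0 < (1 - wJ)⁻¹ := inv_pos.mpr (by linarith)
  refine ⟨A * (2 * KG + KJ * (1 - wJ)⁻¹),
    mul_pos hA (add_pos (by linarith) (mul_pos hKJpos hwJinv)), ?_⟩
  intro t ht p hpm hpnn hpb r hr htr x
  -- basic positivity facts
  have hφcpos : ∀ s : ℝ, 0 < s → 0 < φc s := fun s hs => by
    have := hφcMono (mem_Ici.mpr le_rfl) (mem_Ici.mpr hs.le) hs
    rwa [hφc0] at this
  have hVpos : ∀ s : ℝ, 0 < s → 0 < V x s := fun s hs => by
    rw [hV]; exact ENNReal.toReal_pos (hpos x s hs).ne' (hfin x s hs).ne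
  have hVmono : ∀ s s' : ℝ, 0 < s' → s ≤ s' → V x s ≤ V x s' := fun s s' hs' hss' => by
    rw [hV, hV]
    exact (ENNReal.toReal_le_toReal
      ((lt_of_le_of_lt (measure_mono (ball_subset_ball hss')) (hfin x s' hs')).ne)
      (hfin x s' hs').ne).mpr (measure_mono (ball_subset_ball hss'))
  have hψInvpos : ∀ v : ℝ, 0 < v → 0 < ψInv v := fun v hv => by
    rcases (hψInv_nonneg v hv.le).lt_or_eq with h | h
    · exact h
    · exfalso
      have h2 := hψInv_right v hv.le
      rw [← h, hψ0] at h2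
      linarith
  have hψInvmono : ∀ v w : ℝ, 0 < v → v ≤ w → ψInv v ≤ ψInv w := fun v w hv hvw => by
    by_contra hcon
    push_neg at hcon
    have h1 := hψMono (mem_Ici.mpr (hψInv_nonneg w (by linarith)))
      (mem_Ici.mpr (hψInv_nonneg v hv.le)) hcon
    rw [hψInv_right v hv.le, hψInv_right w (by linarith)] at h1
    linarith
  set ρ := φcInv t with hρdef
  have hφcρ : φc ρ = t := hφcInv_right t ht.le
  have hρpos : 0 < ρ := by
    rcases (hφcInv_nonneg t ht.le).lt_or_eq with h | h
    · exact h
    · exfalso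
      have h2 : φc ρ = φc 0 := by rw [hρdef, ← h]
      rw [hφcρ, hφc0] at h2
      linarith
  have hφcr : 0 < φc r := hφcpos r hr
  have hρr : ρ ≤ r := by
    by_contra hcon
    push_neg at hcon
    have := hφcMono (mem_Ici.mpr hr.le) (mem_Ici.mpr hρpos.le) hcon
    rw [hφcρ] at this
    linarith
  set T := φc r / t with hTdef
  have hT1 : 1 ≤ T := (one_le_div ht).mpr htr
  have hTpos : 0 < T := lt_of_lt_of_le one_pos hT1
  have hφjr : 0 < φj r := hφjpos r hr
  have hVρ : 0 < V x ρ := hVpos ρ hρpos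
  -- annuli
  set sk : ℕ → ℝ := fun k => 2 ^ k * r with hskdef
  have hskpos : ∀ k, 0 < sk k := fun k => by rw [hskdef]; positivity
  have hrsk : ∀ k, r ≤ sk k := fun k => by
    rw [hskdef]
    calc r = 1 * r := (one_mul r).symm
      _ ≤ 2 ^ k * r := mul_le_mul_of_nonneg_right (one_le_pow₀ one_le_two) hr.le
  set Ak : ℕ → Set M := fun k => ball x (2 * sk k) \ ball x (sk k) with hAkdef
  set uk : ℕ → ℝ := fun k => ψInv (t / sk k) with hukdef
  have hukpos : ∀ k, 0 < uk k := fun k => hψInvpos _ (by positivity)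
  have htsk : ∀ k, t ≤ φc (sk k) := fun k =>
    htr.trans (hφcMono.monotoneOn (mem_Ici.mpr hr.le) (mem_Ici.mpr (hskpos k).le) (hrsk k))
  have hskr : ∀ k, sk k / r = 2 ^ k := fun k => by
    rw [hskdef]; field_simp
  -- pointwise bound on each annulus
  set Pk : ℕ → ℝ := fun k =>
    A * ((1 / V x ρ) * Real.exp (-(b * sk k / uk k)) + t / (V x (sk k) * φj (sk k))) with hPkdef
  have hannulus : ∀ k : ℕ, ∀ y ∈ Ak k, p x y ≤ Pk k := by
    intro k y hy
    obtain ⟨hy1, hy2⟩ := hy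
    rw [mem_ball] at hy1
    have hd2 : sk k ≤ dist y x := not_lt.mp (fun h => hy2 (mem_ball.mpr h))
    rw [dist_comm] at hy1 hd2
    have hdpos : 0 < dist x y := lt_of_lt_of_le (hskpos k) hd2
    have hne : x ≠ y := dist_pos.mp hdpos
    have hud : 0 < ψInv (t / dist x y) := hψInvpos _ (by positivity)
    have hudk : ψInv (t / dist x y) ≤ uk k := by
      rw [hukdef]
      exact hψInvmono _ _ (by positivity)
        (div_le_div_of_nonneg_left ht.le (hskpos k) hd2)
    have hratio : b * sk k / uk k ≤ b * dist x y / ψInv (t / dist x y) := by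
      rw [div_le_div_iff₀ (hukpos k) hud]
      exact mul_le_mul (mul_le_mul_of_nonneg_left hd2 hb.le) hudk hud.le (by positivity)
    have hexp : Real.exp (-(b * dist x y / ψInv (t / dist x y)))
        ≤ Real.exp (-(b * sk k / uk k)) := Real.exp_le_exp.mpr (neg_le_neg hratio)
    have hjump : t / (V x (dist x y) * φj (dist x y)) ≤ t / (V x (sk k) * φj (sk k)) := by
      have h1 : 0 < V x (sk k) * φj (sk k) :=
        mul_pos (hVpos _ (hskpos k)) (hφjpos _ (hskpos k))
      have h2 : V x (sk k) * φj (sk k) ≤ V x (dist x y) * φj (dist x y) :=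
        mul_le_mul (hVmono _ _ hdpos hd2) (hφjmono _ _ (hskpos k) hd2)
          (hφjpos _ (hskpos k)).le (hVpos _ hdpos).le
      exact div_le_div_of_nonneg_left ht.le h1 h2
    calc p x y ≤ A * ((1 / V x ρ) * Real.exp (-(b * dist x y / ψInv (t / dist x y))) +
          t / (V x (dist x y) * φj (dist x y))) := hpb x y hne
      _ ≤ Pk k := by
          rw [hPkdef]
          apply mul_le_mul_of_nonneg_left _ hA.le
          exact add_le_add (mul_le_mul_of_nonneg_left hexp (by positivity)) hjump
  -- Gaussian claim
  have claimG : ∀ k : ℕ, V x (2 * sk k) * ((1 / V x ρ) * Real.exp (-(b * sk k / uk k)))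
      ≤ KG * (1 / 2 : ℝ) ^ k * (t / φc r) := by
    intro k
    have hsk := hskpos k
    have h2sk : 0 < 2 * sk k := by positivity
    have h2k1 : (1:ℝ) ≤ (2:ℝ) ^ k := one_le_pow₀ one_le_two
    have h2kpos : (0:ℝ) < (2:ℝ) ^ k := by positivity
    have hexit := exit_time_aux φc ψ ψInv a c₁ c₂ β₁ β₂ hc₁ hc₂ hβ₁ hβ₁₂ ha hφcScale
      hφcpos hψInvpos hψInv_right hψcomp (sk k) t hsk ht (htsk k)
    rw [← hγdef, ← hκdef] at hexit
    set Y := φc (sk k) / t with hYdef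
    have hY1 : 1 ≤ Y := (one_le_div ht).mpr (htsk k)
    have hYpos : 0 < Y := lt_of_lt_of_le one_pos hY1
    have hYγpos : 0 < Y ^ γ := Real.rpow_pos_of_pos hYpos _
    have hz : 0 < b * κ * Y ^ γ := by positivity
    have hE1 : Real.exp (-(b * sk k / uk k)) ≤ Real.exp (-(b * κ * Y ^ γ)) := by
      apply Real.exp_le_exp.mpr
      apply neg_le_neg
      calc b * κ * Y ^ γ = b * (κ * Y ^ γ) := by ring
        _ ≤ b * (sk k / uk k) := mul_le_mul_of_nonneg_left hexit hb.le
        _ = b * sk k / uk k := by ring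
    have hE2 : Real.exp (-(b * κ * Y ^ γ)) ≤ (pp / (b * κ * Y ^ γ)) ^ pp :=
      exp_neg_le_rpow_aux pp _ hpppos hz
    have hE3 : (pp / (b * κ * Y ^ γ)) ^ pp = Cp * Y ^ (-q) := by
      rw [hCpdef]
      rw [show pp / (b * κ * Y ^ γ) = (pp / (b * κ)) * (Y ^ γ)⁻¹ by
        field_simp]
      rw [Real.mul_rpow (by positivity) (by positivity)]
      congr 1
      rw [Real.inv_rpow hYγpos.le, ← Real.rpow_mul hYpos.le, hγpp, Real.rpow_neg hYpos.le]
    -- lower bound for Y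
    have hscale := (hφcScale r (sk k) hr (hrsk k)).1
    rw [hskr k] at hscale
    have hYlow : c₁ * ((2:ℝ) ^ k) ^ β₁ * T ≤ Y := by
      rw [hYdef, hTdef]
      calc c₁ * ((2:ℝ) ^ k) ^ β₁ * (φc r / t)
          ≤ (φc (sk k) / φc r) * (φc r / t) :=
            mul_le_mul_of_nonneg_right hscale (by positivity)
        _ = φc (sk k) / t := by
            field_simp
    have hYq : Y ^ (-q) ≤ c₁ ^ (-q) * (((2:ℝ) ^ k) ^ β₁) ^ (-q) * T ^ (-q) := by
      have h1 : Y ^ (-q) ≤ (c₁ * ((2:ℝ) ^ k) ^ β₁ * T) ^ (-q) :=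
        Real.rpow_le_rpow_of_nonpos (by positivity) hYlow (by linarith)
      have h2 : (c₁ * ((2:ℝ) ^ k) ^ β₁ * T) ^ (-q)
          = c₁ ^ (-q) * (((2:ℝ) ^ k) ^ β₁) ^ (-q) * T ^ (-q) := by
        rw [Real.mul_rpow (by positivity) hTpos.le, Real.mul_rpow hc₁.le (by positivity)]
      rw [h2] at h1
      exact h1
    have hEfinal : Real.exp (-(b * sk k / uk k))
        ≤ Cp * (c₁ ^ (-q) * (((2:ℝ) ^ k) ^ β₁) ^ (-q) * T ^ (-q)) := by
      calc Real.exp (-(b * sk k / uk k)) ≤ Cp * Y ^ (-q) := by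
            rw [← hE3]; exact hE1.trans hE2
        _ ≤ Cp * (c₁ ^ (-q) * (((2:ℝ) ^ k) ^ β₁) ^ (-q) * T ^ (-q)) :=
            mul_le_mul_of_nonneg_left hYq hCppos.le
    -- volume ratio
    have hVr : V x (2 * sk k) / V x ρ
        ≤ Cμ * ((2:ℝ) ^ d₂ * ((2:ℝ) ^ k) ^ d₂) * (T ^ e / c₁ ^ e) := by
      have hVD1 := hVD x ρ (2 * sk k) hρpos (hρr.trans ((hrsk k).trans (by linarith)))
      have h2skρ : 2 * sk k / ρ = 2 * 2 ^ k * (r / ρ) := by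
        rw [hskdef]; field_simp
      rw [h2skρ] at hVD1
      have hscaleρ := (hφcScale ρ r hρpos hρr).1
      rw [hφcρ] at hscaleρ
      have hrρ : (r / ρ) ^ β₁ ≤ T / c₁ := by
        rw [le_div_iff₀ hc₁, hTdef]
        calc (r / ρ) ^ β₁ * c₁ = c₁ * (r / ρ) ^ β₁ := by ring
          _ ≤ φc r / t := hscaleρ
      have hrρ2 : r / ρ ≤ (T / c₁) ^ β₁⁻¹ := by
        calc r / ρ = ((r / ρ) ^ β₁) ^ β₁⁻¹ := by
              rw [← Real.rpow_mul (by positivity), mul_inv_cancel₀ (by linarith),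
                Real.rpow_one]
          _ ≤ (T / c₁) ^ β₁⁻¹ := Real.rpow_le_rpow (by positivity) hrρ (by positivity)
      have hrρ3 : (r / ρ) ^ d₂ ≤ T ^ e / c₁ ^ e := by
        calc (r / ρ) ^ d₂ ≤ ((T / c₁) ^ β₁⁻¹) ^ d₂ :=
              Real.rpow_le_rpow (by positivity) hrρ2 hd₂.le
          _ = (T / c₁) ^ e := by rw [← Real.rpow_mul (by positivity), hedef]
          _ = T ^ e / c₁ ^ e := Real.div_rpow hTpos.le hc₁.le e
      calc V x (2 * sk k) / V x ρ ≤ Cμ * (2 * 2 ^ k * (r / ρ)) ^ d₂ := hVD1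
        _ = Cμ * ((2:ℝ) ^ d₂ * ((2:ℝ) ^ k) ^ d₂) * (r / ρ) ^ d₂ := by
            rw [Real.mul_rpow (by positivity) (by positivity),
              Real.mul_rpow (by norm_num) (by positivity)]
            ring
        _ ≤ Cμ * ((2:ℝ) ^ d₂ * ((2:ℝ) ^ k) ^ d₂) * (T ^ e / c₁ ^ e) := by
            apply mul_le_mul_of_nonneg_left hrρ3
            have : (0:ℝ) < (2:ℝ) ^ d₂ := Real.rpow_pos_of_pos two_pos _
            positivity
    -- power of 2 combination
    have hpow2 : ((2:ℝ) ^ k) ^ d₂ * (((2:ℝ) ^ k) ^ β₁) ^ (-q) ≤ (1 / 2 : ℝ) ^ k := by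
      have hcomb : ((2:ℝ) ^ k) ^ d₂ * (((2:ℝ) ^ k) ^ β₁) ^ (-q)
          = ((2:ℝ) ^ k) ^ (d₂ + β₁ * (-q)) := by
        rw [← Real.rpow_mul (by positivity), ← Real.rpow_add h2kpos]
      rw [hcomb]
      calc ((2:ℝ) ^ k) ^ (d₂ + β₁ * (-q)) ≤ ((2:ℝ) ^ k) ^ (-1 : ℝ) := by
            apply Real.rpow_le_rpow_of_exponent_le h2k1
            rw [hqdef]
            have hmul : 1 * (d₂ + 2) ≤ β₁ * (d₂ + 2) :=
              mul_le_mul_of_nonneg_right hβ₁.le (by linarith)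
            linarith
        _ = (1 / 2 : ℝ) ^ k := by
            rw [Real.rpow_neg_one, ← inv_pow, one_div]
    -- T combination
    have hTcomb : T ^ e * T ^ (-q) ≤ t / φc r := by
      rw [← Real.rpow_add hTpos]
      calc T ^ (e + -q) ≤ T ^ (-1 : ℝ) := by
            apply Real.rpow_le_rpow_of_exponent_le hT1
            rw [hqdef]
            linarith
        _ = t / φc r := by rw [Real.rpow_neg_one, hTdef, inv_div]
    -- combine everything
    have hexpnn : 0 ≤ Real.exp (-(b * sk k / uk k)) := (Real.exp_pos _).le
    have h2d : (0:ℝ) < (2:ℝ) ^ d₂ := Real.rpow_pos_of_pos two_pos _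
    calc V x (2 * sk k) * ((1 / V x ρ) * Real.exp (-(b * sk k / uk k)))
        = (V x (2 * sk k) / V x ρ) * Real.exp (-(b * sk k / uk k)) := by ring
      _ ≤ (Cμ * ((2:ℝ) ^ d₂ * ((2:ℝ) ^ k) ^ d₂) * (T ^ e / c₁ ^ e)) *
          (Cp * (c₁ ^ (-q) * (((2:ℝ) ^ k) ^ β₁) ^ (-q) * T ^ (-q))) := by
          apply mul_le_mul hVr hEfinal hexpnn
          have hp1 : (0:ℝ) < ((2:ℝ) ^ k) ^ d₂ := Real.rpow_pos_of_pos h2kpos _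
          have hp2 : (0:ℝ) < T ^ e := Real.rpow_pos_of_pos hTpos _
          have hp3 : (0:ℝ) < c₁ ^ e := Real.rpow_pos_of_pos hc₁ _
          positivity
      _ = (Cμ * (2:ℝ) ^ d₂ * Cp * c₁ ^ (-q) / c₁ ^ e) *
          ((((2:ℝ) ^ k) ^ d₂ * (((2:ℝ) ^ k) ^ β₁) ^ (-q)) * (T ^ e * T ^ (-q))) := by
          ring
      _ ≤ KG * ((1 / 2 : ℝ) ^ k * (t / φc r)) := by
          rw [hKGdef]
          apply mul_le_mul_of_nonneg_left
          · apply mul_le_mul hpow2 hTcomb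
            · have hp2 : (0:ℝ) < T ^ e := Real.rpow_pos_of_pos hTpos _
              have hp4 : (0:ℝ) < T ^ (-q) := Real.rpow_pos_of_pos hTpos _
              positivity
            · positivity
          · have hp3 : (0:ℝ) < c₁ ^ e := Real.rpow_pos_of_pos hc₁ _
            have hp5 : (0:ℝ) < c₁ ^ (-q) := Real.rpow_pos_of_pos hc₁ _
            positivity
      _ = KG * (1 / 2 : ℝ) ^ k * (t / φc r) := by ring
  -- jump claim
  have claimJ : ∀ k : ℕ, V x (2 * sk k) * (t / (V x (sk k) * φj (sk k)))
      ≤ KJ * wJ ^ k * (t / φj r) := by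
    intro k
    have hsk := hskpos k
    have h2sk : 0 < 2 * sk k := by positivity
    have hVsk : 0 < V x (sk k) := hVpos _ hsk
    have hφjsk : 0 < φj (sk k) := hφjpos _ hsk
    have h2kpos : (0:ℝ) < (2:ℝ) ^ k := by positivity
    have h2d : (0:ℝ) < (2:ℝ) ^ d₂ := Real.rpow_pos_of_pos two_pos _
    -- volume doubling
    have hVr : V x (2 * sk k) ≤ Cμ * (2:ℝ) ^ d₂ * V x (sk k) := by
      have hVD1 := hVD x (sk k) (2 * sk k) hsk (by linarith)
      have h2 : 2 * sk k / sk k = (2:ℝ) := by field_simp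
      rw [h2] at hVD1
      rw [div_le_iff₀ hVsk] at hVD1
      linarith
    -- jump scaling
    have hφjlow : c₃ * ((2:ℝ) ^ k) ^ β₁' * φj r ≤ φj (sk k) := by
      have h1 := hφjscale r (sk k) hr (hrsk k)
      rw [hskr k] at h1
      rw [le_div_iff₀ hφjr] at h1
      linarith
    have hwJk : wJ ^ k = (((2:ℝ) ^ k) ^ β₁')⁻¹ := by
      rw [hwJdef, Real.rpow_neg (by norm_num)]
      rw [← Real.rpow_natCast (2:ℝ) k, ← Real.rpow_mul (by norm_num),
        mul_comm, Real.rpow_mul (by norm_num), Real.rpow_natCast, inv_pow]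
    have hjk : t / φj (sk k) ≤ t * wJ ^ k / (c₃ * φj r) := by
      have hlow : 0 < c₃ * ((2:ℝ) ^ k) ^ β₁' * φj r := by
        have : (0:ℝ) < ((2:ℝ) ^ k) ^ β₁' := Real.rpow_pos_of_pos h2kpos _
        positivity
      calc t / φj (sk k) ≤ t / (c₃ * ((2:ℝ) ^ k) ^ β₁' * φj r) :=
            div_le_div_of_nonneg_left ht.le hlow hφjlow
        _ = t * wJ ^ k / (c₃ * φj r) := by
            have hwne : ((2:ℝ) ^ k) ^ β₁' ≠ 0 :=
              (Real.rpow_pos_of_pos h2kpos _).ne'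
            rw [hwJk, div_eq_div_iff (ne_of_gt hlow) (by positivity)]
            have hinv : (((2:ℝ) ^ k) ^ β₁')⁻¹ * ((2:ℝ) ^ k) ^ β₁' = 1 :=
              inv_mul_cancel₀ hwne
            linear_combination (-(t * c₃ * φj r)) * hinv
    calc V x (2 * sk k) * (t / (V x (sk k) * φj (sk k)))
        = (V x (2 * sk k) / V x (sk k)) * (t / φj (sk k)) := by
          field_simp
      _ ≤ (Cμ * (2:ℝ) ^ d₂) * (t * wJ ^ k / (c₃ * φj r)) := by
          apply mul_le_mul _ hjk (by positivity) (by positivity)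
          rw [div_le_iff₀ hVsk]
          linarith
      _ = KJ * wJ ^ k * (t / φj r) := by
          rw [hKJdef]
          field_simp
  -- measurability / reduction to lintegral
  set S := (ball x r)ᶜ with hSdef
  have hmy : AEStronglyMeasurable (fun y => p x y) (μ.restrict S) :=
    ((hpm.comp measurable_prodMk_left).aestronglyMeasurable)
  have hint_eq : ∫ y in S, p x y ∂μ = (∫⁻ y in S, ENNReal.ofReal (p x y) ∂μ).toReal :=
    integral_eq_lintegral_of_nonneg_ae (Filter.Eventually.of_forall fun y => hpnn x y) hmy
  rw [hint_eq]
  have hRHSnn : 0 ≤ A * (2 * KG + KJ * (1 - wJ)⁻¹) * t * (1 / φc r + 1 / φj r) := by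
    have h1 : 0 ≤ 2 * KG + KJ * (1 - wJ)⁻¹ :=
      add_nonneg (by linarith) (mul_pos hKJpos hwJinv).le
    positivity
  apply ENNReal.toReal_le_of_le_ofReal hRHSnn
  -- cover complement by annuli
  have hsub : S ⊆ ⋃ k : ℕ, Ak k := by
    intro y hy
    have hd : r ≤ dist y x := not_lt.mp (fun h => hy (mem_ball.mpr h))
    obtain ⟨k, hk1, hk2⟩ := annulus_exists_aux (dist y x) r hr hd
    refine mem_iUnion.mpr ⟨k, ?_⟩
    constructor
    · rw [mem_ball]
      calc dist y x < 2 ^ (k + 1) * r := hk2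
        _ = 2 * sk k := by rw [hskdef]; ring
    · intro hmem
      rw [mem_ball, hskdef] at hmem
      exact absurd hmem (not_lt.mpr hk1)
  set B1 := A * KG * (t / φc r) with hB1def
  set B2 := A * KJ * (t / φj r) with hB2def
  have hB1nn : 0 ≤ B1 := by rw [hB1def]; positivity
  have hB2nn : 0 ≤ B2 := by rw [hB2def]; positivity
  -- per-annulus lintegral bound
  have hterm : ∀ k : ℕ, ∫⁻ y in Ak k, ENNReal.ofReal (p x y) ∂μ
      ≤ ENNReal.ofReal (B1 * (1 / 2 : ℝ) ^ k + B2 * wJ ^ k) := by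
    intro k
    have hsk := hskpos k
    have h2sk : 0 < 2 * sk k := by positivity
    have hPknn : 0 ≤ Pk k := by
      rw [hPkdef]
      have h1 : 0 < V x (sk k) := hVpos _ hsk
      have h2 : 0 < φj (sk k) := hφjpos _ hsk
      positivity
    have hAkmeas : MeasurableSet (Ak k) := measurableSet_ball.diff measurableSet_ball
    have hμball : μ (ball x (2 * sk k)) = ENNReal.ofReal (V x (2 * sk k)) := by
      rw [hV]
      exact (ENNReal.ofReal_toReal (hfin x _ h2sk).ne).symm
    have hmaster : Pk k * V x (2 * sk k) ≤ B1 * (1 / 2 : ℝ) ^ k + B2 * wJ ^ k := by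
      have hG := claimG k
      have hJ := claimJ k
      calc Pk k * V x (2 * sk k)
          = A * (V x (2 * sk k) * ((1 / V x ρ) * Real.exp (-(b * sk k / uk k)))
            + V x (2 * sk k) * (t / (V x (sk k) * φj (sk k)))) := by
            rw [hPkdef]; ring
        _ ≤ A * (KG * (1 / 2 : ℝ) ^ k * (t / φc r) + KJ * wJ ^ k * (t / φj r)) :=
            mul_le_mul_of_nonneg_left (add_le_add hG hJ) hA.le
        _ = B1 * (1 / 2 : ℝ) ^ k + B2 * wJ ^ k := by
            rw [hB1def, hB2def]; ring
    calc ∫⁻ y in Ak k, ENNReal.ofReal (p x y) ∂μ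
        ≤ ∫⁻ _ in Ak k, ENNReal.ofReal (Pk k) ∂μ :=
          setLIntegral_mono' hAkmeas fun y hy => ENNReal.ofReal_le_ofReal (hannulus k y hy)
      _ = ENNReal.ofReal (Pk k) * μ (Ak k) := setLIntegral_const _ _
      _ ≤ ENNReal.ofReal (Pk k) * ENNReal.ofReal (V x (2 * sk k)) := by
          apply mul_le_mul_right
          rw [← hμball]
          exact measure_mono diff_subset
      _ = ENNReal.ofReal (Pk k * V x (2 * sk k)) := (ENNReal.ofReal_mul hPknn).symm
      _ ≤ ENNReal.ofReal (B1 * (1 / 2 : ℝ) ^ k + B2 * wJ ^ k) :=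
          ENNReal.ofReal_le_ofReal hmaster
  -- geometric series computation
  have hgeom : ∀ (D w : ℝ), 0 ≤ D → 0 ≤ w → w < 1 →
      ∑' k : ℕ, ENNReal.ofReal (D * w ^ k) = ENNReal.ofReal (D * (1 - w)⁻¹) := by
    intro D w hD hw hw1
    have hcong : ∀ k : ℕ, ENNReal.ofReal (D * w ^ k)
        = ENNReal.ofReal D * (ENNReal.ofReal w) ^ k := fun k => by
      rw [ENNReal.ofReal_mul hD, ENNReal.ofReal_pow hw]
    rw [tsum_congr hcong, ENNReal.tsum_mul_left, ENNReal.tsum_geometric,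
      ENNReal.ofReal_mul hD]
    congr 1
    rw [ENNReal.ofReal_inv_of_pos (by linarith), ENNReal.ofReal_sub _ hw, ENNReal.ofReal_one]
  calc ∫⁻ y in S, ENNReal.ofReal (p x y) ∂μ
      ≤ ∫⁻ y in ⋃ k : ℕ, Ak k, ENNReal.ofReal (p x y) ∂μ := lintegral_mono_set hsub
    _ ≤ ∑' k : ℕ, ∫⁻ y in Ak k, ENNReal.ofReal (p x y) ∂μ := lintegral_iUnion_le _ _
    _ ≤ ∑' k : ℕ, ENNReal.ofReal (B1 * (1 / 2 : ℝ) ^ k + B2 * wJ ^ k) :=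
        ENNReal.tsum_le_tsum hterm
    _ = (∑' k : ℕ, ENNReal.ofReal (B1 * (1 / 2 : ℝ) ^ k))
        + ∑' k : ℕ, ENNReal.ofReal (B2 * wJ ^ k) := by
        rw [← ENNReal.tsum_add]
        exact tsum_congr fun k => ENNReal.ofReal_add (by positivity) (by positivity)
    _ = ENNReal.ofReal (B1 * (1 - (1 / 2 : ℝ))⁻¹) + ENNReal.ofReal (B2 * (1 - wJ)⁻¹) := by
        rw [hgeom B1 (1/2) hB1nn (by norm_num) (by norm_num),
          hgeom B2 wJ hB2nn hwJpos.le hwJlt]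
    _ = ENNReal.ofReal (B1 * 2 + B2 * (1 - wJ)⁻¹) := by
        rw [← ENNReal.ofReal_add (by positivity) (by positivity)]
        norm_num
    _ ≤ ENNReal.ofReal (A * (2 * KG + KJ * (1 - wJ)⁻¹) * t * (1 / φc r + 1 / φj r)) := by
        apply ENNReal.ofReal_le_ofReal
        have hid : A * (2 * KG + KJ * (1 - wJ)⁻¹) * t * (1 / φc r + 1 / φj r)
            = B1 * 2 + B2 * (1 - wJ)⁻¹
              + (A * KJ * (1 - wJ)⁻¹ * (t / φc r) + 2 * A * KG * (t / φj r)) := by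
          rw [hB1def, hB2def]
          ring
        have hnn1 : 0 ≤ A * KJ * (1 - wJ)⁻¹ * (t / φc r) := by positivity
        have hnn2 : 0 ≤ 2 * A * KG * (t / φj r) := by positivity
        linarith
end

section
/- Let φ_c : [0,∞) → [0,∞) be a strictly increasing continuous bijection satisfying c₁ (R/r)^{β₁} ≤ φ_c(R)/φ_c(r) ≤ c₂ (R/r)^{β₂} for all 0 < r ≤ R, with constants c₁, c₂ > 0 and 1 < β₁ ≤ β₂. Let ψ : [0,∞) → [0,∞) be a strictly increasing bijection with a^{-1} φ_c(r)/r ≤ ψ(r) ≤ a φ_c(r)/r for all r > 0, for some a ≥ 1. Then for every C* > 0 there exists C₀ > 0 such that for every t ≥ 1, the function r ↦ F_{1,t}(r) := exp( C* · r/ψ^{-1}(t/r) ) / ( r/ψ^{-1}(t/r) ) is strictly increasing on the interval [C₀ φ_c^{-1}(t), ∞). -/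
open Set Real

lemma auxH (Cs : ℝ) (hCs : 0 < Cs) :
    StrictMonoOn (fun x : ℝ => Real.exp (Cs * x) / x) (Ici (1 / Cs)) := by
  intro x hx y hy hxy
  simp only [mem_Ici] at hx hy
  have hx0 : 0 < x := lt_of_lt_of_le (by positivity) hx
  have hy0 : 0 < y := lt_of_lt_of_le (by positivity) hy
  have hx1 : 1 ≤ Cs * x := by
    rw [div_le_iff₀ hCs] at hx; linarith [hx]
  simp only
  rw [div_lt_div_iff₀ hx0 hy0]
  have h1 : Real.exp (Cs * y) = Real.exp (Cs * x) * Real.exp (Cs * (y - x)) := by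
    rw [← Real.exp_add]; ring_nf
  have h2 : Cs * (y - x) + 1 < Real.exp (Cs * (y - x)) :=
    Real.add_one_lt_exp (ne_of_gt (mul_pos hCs (sub_pos.mpr hxy)))
  have h3 : y < Real.exp (Cs * (y - x)) * x := by nlinarith
  have h4 := mul_lt_mul_of_pos_left h3 (Real.exp_pos (Cs * x))
  rw [h1]; nlinarith


/-- Lemma `L:keyexist`(i): for every `C* > 0` there is `C₀ > 0` such that
for every `t ≥ 1`, the function `r ↦ exp(C* r/ψ⁻¹(t/r)) / (r/ψ⁻¹(t/r))` is strictly
increasing on `[C₀ φ_c⁻¹(t), ∞)`. -/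
theorem stmt_11
    (φc φcInv : ℝ → ℝ) (hφc0 : φc 0 = 0)
    (hφcMono : StrictMonoOn φc (Ici 0)) (hφcCont : ContinuousOn φc (Ici 0))
    (hφcInv_nonneg : ∀ t : ℝ, 0 ≤ t → 0 ≤ φcInv t)
    (hφcInv_left : ∀ r : ℝ, 0 ≤ r → φcInv (φc r) = r)
    (hφcInv_right : ∀ t : ℝ, 0 ≤ t → φc (φcInv t) = t)
    (c₁ c₂ β₁ β₂ : ℝ) (hc₁ : 0 < c₁) (hc₂ : 0 < c₂) (hβ₁ : 1 < β₁) (hβ₁₂ : β₁ ≤ β₂)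
    (hφcScale : ∀ r R : ℝ, 0 < r → r ≤ R →
      c₁ * (R / r) ^ β₁ ≤ φc R / φc r ∧ φc R / φc r ≤ c₂ * (R / r) ^ β₂)
    (ψ ψInv : ℝ → ℝ) (a : ℝ) (ha : 1 ≤ a)
    (hψ0 : ψ 0 = 0) (hψMono : StrictMonoOn ψ (Ici 0))
    (hψInv_nonneg : ∀ t : ℝ, 0 ≤ t → 0 ≤ ψInv t)
    (hψInv_left : ∀ r : ℝ, 0 ≤ r → ψInv (ψ r) = r)
    (hψInv_right : ∀ t : ℝ, 0 ≤ t → ψ (ψInv t) = t)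
    (hψcomp : ∀ r : ℝ, 0 < r → a⁻¹ * (φc r / r) ≤ ψ r ∧ ψ r ≤ a * (φc r / r)) :
    ∀ Cs : ℝ, 0 < Cs → ∃ C₀ : ℝ, 0 < C₀ ∧ ∀ t : ℝ, 1 ≤ t →
      StrictMonoOn (fun r : ℝ => Real.exp (Cs * (r / ψInv (t / r))) / (r / ψInv (t / r)))
        (Ici (C₀ * φcInv t)) := by
  intro Cs hCs
  have ha0 : 0 < a := lt_of_lt_of_le one_pos ha
  set K : ℝ := (a * Cs / c₁) ^ (1 / β₁) with hK
  have hK0 : 0 ≤ K := Real.rpow_nonneg (by positivity) _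
  set M : ℝ := max 1 K with hM
  have hM1 : 1 ≤ M := le_max_left _ _
  have hM0 : 0 < M := lt_of_lt_of_le one_pos hM1
  have hβ₁0 : 0 < β₁ := lt_trans one_pos hβ₁
  have hMb : a * Cs / c₁ ≤ M ^ β₁ := by
    have h1 : K ^ β₁ ≤ M ^ β₁ :=
      Real.rpow_le_rpow hK0 (le_max_right _ _) (le_of_lt hβ₁0)
    have h2 : K ^ β₁ = a * Cs / c₁ := by
      rw [hK, one_div, Real.rpow_inv_rpow (by positivity) (ne_of_gt hβ₁0)]
    linarith
  refine ⟨M / Cs, by positivity, ?_⟩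
  intro t ht
  have ht0 : 0 < t := lt_of_lt_of_le one_pos ht
  set u : ℝ := φcInv t with hu
  have hu0 : 0 < u := by
    rcases lt_or_eq_of_le (hφcInv_nonneg t (le_of_lt ht0)) with h | h
    · exact h
    · exfalso
      have := hφcInv_right t (le_of_lt ht0)
      rw [← h] at this
      rw [hφc0] at this
      linarith
  have hφu : φc u = t := hφcInv_right t (le_of_lt ht0)
  -- key estimate
  have key : ∀ r : ℝ, M / Cs * u ≤ r →
      0 < r ∧ 0 < ψInv (t / r) ∧ ψInv (t / r) ≤ Cs * r := by
    intro r hr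
    have hr0 : 0 < r := lt_of_lt_of_le (by positivity) hr
    have htr0 : 0 < t / r := div_pos ht0 hr0
    have hd0 : 0 < ψInv (t / r) := by
      rcases lt_or_eq_of_le (hψInv_nonneg (t / r) (le_of_lt htr0)) with h | h
      · exact h
      · exfalso
        have := hψInv_right (t / r) (le_of_lt htr0)
        rw [← h, hψ0] at this
        linarith
    refine ⟨hr0, hd0, ?_⟩
    -- φc (M * u) ≥ a * Cs * t
    have hscale := (hφcScale u (M * u) hu0 (by nlinarith)).1
    have hMuu : (M * u / u) = M := by field_simp
    rw [hMuu, hφu] at hscale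
    have hφMu : a * Cs * t ≤ φc (M * u) := by
      have h5 : c₁ * M ^ β₁ * t ≤ φc (M * u) := (le_div_iff₀ ht0).mp hscale
      have h6 : a * Cs ≤ c₁ * M ^ β₁ := by
        rw [div_le_iff₀' hc₁] at hMb; linarith
      nlinarith [mul_le_mul_of_nonneg_right h6 (le_of_lt ht0)]
    -- φc (Cs * r) ≥ φc (M * u)
    have hMuCr : M * u ≤ Cs * r := by
      have := mul_le_mul_of_nonneg_left hr (le_of_lt hCs)
      calc M * u = Cs * (M / Cs * u) := by field_simp
        _ ≤ Cs * r := this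
    have hφCr : φc (M * u) ≤ φc (Cs * r) :=
      hφcMono.monotoneOn (by positivity : (0:ℝ) ≤ M * u) (by positivity : (0:ℝ) ≤ Cs * r) hMuCr
    -- ψ (Cs r) ≥ t / r
    have hψlow := (hψcomp (Cs * r) (by positivity)).1
    have hψge : t / r ≤ ψ (Cs * r) := by
      have h1 : a * Cs * t ≤ φc (Cs * r) := le_trans hφMu hφCr
      have hane : a ≠ 0 := ne_of_gt ha0
      have hCne : Cs ≠ 0 := ne_of_gt hCs
      have hrne : r ≠ 0 := ne_of_gt hr0
      have heq : t / r = a⁻¹ * (a * Cs * t / (Cs * r)) := by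
        field_simp
      rw [heq]
      have h2 : a * Cs * t / (Cs * r) ≤ φc (Cs * r) / (Cs * r) :=
        div_le_div_of_nonneg_right h1 (by positivity) |>.trans_eq rfl
      calc a⁻¹ * (a * Cs * t / (Cs * r)) ≤ a⁻¹ * (φc (Cs * r) / (Cs * r)) :=
            mul_le_mul_of_nonneg_left h2 (by positivity)
        _ ≤ ψ (Cs * r) := hψlow
    -- conclude
    by_contra hcon
    push_neg at hcon
    have := hψMono (mem_Ici.mpr (by positivity : (0:ℝ) ≤ Cs * r))
      (mem_Ici.mpr (hψInv_nonneg (t/r) (le_of_lt htr0))) hcon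
    rw [hψInv_right (t / r) (le_of_lt htr0)] at this
    linarith
  -- main strict monotonicity
  intro r1 hr1 r2 hr2 h12
  simp only [mem_Ici] at hr1 hr2
  obtain ⟨hr10, hd10, hle1⟩ := key r1 hr1
  obtain ⟨hr20, hd20, hle2⟩ := key r2 hr2
  have htr1 : (0:ℝ) ≤ t / r1 := le_of_lt (div_pos ht0 hr10)
  have htr2 : (0:ℝ) ≤ t / r2 := le_of_lt (div_pos ht0 hr20)
  have hddec : ψInv (t / r2) < ψInv (t / r1) := by
    by_contra hcon
    push_neg at hcon
    have hmono := hψMono.monotoneOn (mem_Ici.mpr (hψInv_nonneg (t/r1) htr1))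
      (mem_Ici.mpr (hψInv_nonneg (t/r2) htr2)) hcon
    rw [hψInv_right (t / r1) htr1, hψInv_right (t / r2) htr2] at hmono
    have hlt : t / r2 < t / r1 := div_lt_div_of_pos_left ht0 hr10 h12
    linarith
  have hx1 : 1 / Cs ≤ r1 / ψInv (t / r1) := by
    rw [div_le_div_iff₀ hCs hd10]
    linarith
  have hx2 : 1 / Cs ≤ r2 / ψInv (t / r2) := by
    rw [div_le_div_iff₀ hCs hd20]
    linarith
  have hxx : r1 / ψInv (t / r1) < r2 / ψInv (t / r2) := by
    rw [div_lt_div_iff₀ hd10 hd20]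
    have hA := mul_lt_mul_of_pos_left hddec hr10
    have hB := mul_lt_mul_of_pos_right h12 hd10
    linarith
  exact auxH Cs hCs (mem_Ici.mpr hx1) (mem_Ici.mpr hx2) hxx
end

section
/- Let φ_c : [0,∞) → [0,∞) be a strictly increasing continuous bijection satisfying c₁ (R/r)^{β₁} ≤ φ_c(R)/φ_c(r) ≤ c₂ (R/r)^{β₂} for all 0 < r ≤ R, with constants c₁, c₂ > 0 and 1 < β₁ ≤ β₂. Let ψ : [0,∞) → [0,∞) be a strictly increasing bijection with a^{-1} φ_c(r)/r ≤ ψ(r) ≤ a φ_c(r)/r for all r > 0, for some a ≥ 1. Let φ_j : [0,∞) → [0,∞) be a strictly increasing bijection with φ_j^{-1}(t) ≤ φ_c^{-1}(t) for all t ≥ 1. Then for every C* > 0 there exist constants C₀, C^* > 0 such that for every t ≥ 1 there is a unique r_*(t) ∈ (C₀ φ_c^{-1}(t), ∞) with F_{1,t}(r_*(t)) = F_{2,t}(r_*(t)), F_{1,t}(r) < F_{2,t}(r) for all r ∈ (C₀ φ_c^{-1}(t), r_*(t)), and F_{1,t}(r) > F_{2,t}(r) for all r ∈ (r_*(t), ∞),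 where F_{1,t}(r) = exp( C* · r/ψ^{-1}(t/r) ) / ( r/ψ^{-1}(t/r) ) and F_{2,t}(r) = C^* ψ^{-1}(t/r) / φ_j^{-1}(t). -/
open Set Real

lemma my_inv_pos (f fInv : ℝ → ℝ) (hf0 : f 0 = 0)
    (hnn : ∀ t : ℝ, 0 ≤ t → 0 ≤ fInv t)
    (hright : ∀ t : ℝ, 0 ≤ t → f (fInv t) = t) :
    ∀ x : ℝ, 0 < x → 0 < fInv x := by
  intro x hx
  rcases (hnn x hx.le).eq_or_lt with h | h
  · exfalso
    have := hright x hx.le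
    rw [← h, hf0] at this
    linarith
  · exact h

lemma my_inv_le (f fInv : ℝ → ℝ) (hmono : StrictMonoOn f (Ici 0))
    (hnn : ∀ t : ℝ, 0 ≤ t → 0 ≤ fInv t)
    (hright : ∀ t : ℝ, 0 ≤ t → f (fInv t) = t) :
    ∀ x y : ℝ, 0 ≤ x → x ≤ y → fInv x ≤ fInv y := by
  intro x y hx hxy
  by_contra h
  push_neg at h
  have h2 := hmono (mem_Ici.mpr (hnn y (hx.trans hxy))) (mem_Ici.mpr (hnn x hx)) h
  rw [hright x hx, hright y (hx.trans hxy)] at h2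
  linarith

lemma my_inv_lt (f fInv : ℝ → ℝ) (hmono : StrictMonoOn f (Ici 0))
    (hnn : ∀ t : ℝ, 0 ≤ t → 0 ≤ fInv t)
    (hright : ∀ t : ℝ, 0 ≤ t → f (fInv t) = t) :
    ∀ x y : ℝ, 0 ≤ x → x < y → fInv x < fInv y := by
  intro x y hx hxy
  by_contra h
  push_neg at h
  have h2 := hmono.monotoneOn (mem_Ici.mpr (hnn y (hx.trans hxy.le))) (mem_Ici.mpr (hnn x hx)) h
  rw [hright x hx, hright y (hx.trans hxy.le)] at h2
  linarith

lemma my_inv_contAt (f fInv : ℝ → ℝ) (hf0 : f 0 = 0) (hmono : StrictMonoOn f (Ici 0))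
    (hnn : ∀ t : ℝ, 0 ≤ t → 0 ≤ fInv t)
    (hleft : ∀ r : ℝ, 0 ≤ r → fInv (f r) = r)
    (hright : ∀ t : ℝ, 0 ≤ t → f (fInv t) = t) :
    ∀ x : ℝ, 0 < x → ContinuousAt fInv x := by
  intro x hx
  have hpos := my_inv_pos f fInv hf0 hnn hright
  have hfpos : ∀ r : ℝ, 0 < r → 0 < f r := by
    intro r hr
    have := hmono (mem_Ici.mpr le_rfl) (mem_Ici.mpr hr.le) hr
    rwa [hf0] at this
  have hsm : StrictMonoOn fInv (Ioi 0) := by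
    intro u hu v hv huv
    exact my_inv_lt f fInv hmono hnn hright u v (le_of_lt hu) huv
  apply hsm.continuousAt_of_image_mem_nhds (isOpen_Ioi.mem_nhds hx)
  have himg : fInv '' (Ioi 0) = Ioi 0 := by
    ext z
    constructor
    · rintro ⟨w, hw, rfl⟩
      exact hpos w hw
    · intro hz
      exact ⟨f z, hfpos z hz, hleft z (le_of_lt hz)⟩
  rw [himg]
  exact isOpen_Ioi.mem_nhds (hpos x hx)

lemma my_crossing (F1 F2 : ℝ → ℝ) (L r₁ r₂ : ℝ)
    (hmono : ∀ x y : ℝ, L < x → x < y → F1 x - F2 x < F1 y - F2 y)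
    (h1 : L < r₁) (h12 : r₁ ≤ r₂) (hD1 : F1 r₁ < F2 r₁) (hD2 : F2 r₂ < F1 r₂)
    (hcont : ContinuousOn (fun r => F1 r - F2 r) (Icc r₁ r₂)) :
    ∃! rs : ℝ, L < rs ∧ F1 rs = F2 rs ∧ (∀ r : ℝ, L < r → r < rs → F1 r < F2 r) ∧
      (∀ r : ℝ, rs < r → F2 r < F1 r) := by
  obtain ⟨rs, hrsmem, hrs0⟩ : ∃ rs ∈ Icc r₁ r₂, (fun r => F1 r - F2 r) rs = 0 := by
    have h0 : (0:ℝ) ∈ Icc (F1 r₁ - F2 r₁) (F1 r₂ - F2 r₂) := ⟨by linarith, by linarith⟩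
    obtain ⟨rs, h, he⟩ := intermediate_value_Icc h12 hcont h0
    exact ⟨rs, h, he⟩
  have heq : F1 rs = F2 rs := by
    simp only [sub_eq_zero] at hrs0
    exact hrs0
  have hLrs : L < rs := lt_of_lt_of_le h1 hrsmem.1
  refine ⟨rs, ⟨hLrs, heq, ?_, ?_⟩, ?_⟩
  · intro r hr hrrs
    have := hmono r rs hr hrrs
    rw [heq] at this
    linarith
  · intro r hrs
    have := hmono rs r hLrs hrs
    rw [heq] at this
    linarith
  · rintro y ⟨hLy, hy, h3, h4⟩
    rcases lt_trichotomy y rs with h | h | h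
    · exfalso
      have := h4 rs h
      rw [heq] at this
      exact lt_irrefl _ this
    · exact h
    · exfalso
      have := h3 rs hLrs h
      rw [heq] at this
      exact lt_irrefl _ this

/-- Lemma `L:keyexist`(ii): for every `C* > 0` there are `C₀, C^* > 0` such
that for each `t ≥ 1` there is a unique crossing point `r_*(t) ∈ (C₀ φ_c⁻¹(t), ∞)` of
`F_{1,t}(r) = exp(C* r/ψ⁻¹(t/r)) / (r/ψ⁻¹(t/r))` and `F_{2,t}(r) = C^* ψ⁻¹(t/r)/φ_j⁻¹(t)`,
with `F_{1,t} < F_{2,t}` before it and `F_{1,t} > F_{2,t}` after it. -/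
theorem stmt_12
    (φc φcInv : ℝ → ℝ) (hφc0 : φc 0 = 0)
    (hφcMono : StrictMonoOn φc (Ici 0)) (hφcCont : ContinuousOn φc (Ici 0))
    (hφcInv_nonneg : ∀ t : ℝ, 0 ≤ t → 0 ≤ φcInv t)
    (hφcInv_left : ∀ r : ℝ, 0 ≤ r → φcInv (φc r) = r)
    (hφcInv_right : ∀ t : ℝ, 0 ≤ t → φc (φcInv t) = t)
    (c₁ c₂ β₁ β₂ : ℝ) (hc₁ : 0 < c₁) (hc₂ : 0 < c₂) (hβ₁ : 1 < β₁) (hβ₁₂ : β₁ ≤ β₂)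
    (hφcScale : ∀ r R : ℝ, 0 < r → r ≤ R →
      c₁ * (R / r) ^ β₁ ≤ φc R / φc r ∧ φc R / φc r ≤ c₂ * (R / r) ^ β₂)
    (ψ ψInv : ℝ → ℝ) (a : ℝ) (ha : 1 ≤ a)
    (hψ0 : ψ 0 = 0) (hψMono : StrictMonoOn ψ (Ici 0))
    (hψInv_nonneg : ∀ t : ℝ, 0 ≤ t → 0 ≤ ψInv t)
    (hψInv_left : ∀ r : ℝ, 0 ≤ r → ψInv (ψ r) = r)
    (hψInv_right : ∀ t : ℝ, 0 ≤ t → ψ (ψInv t) = t)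
    (hψcomp : ∀ r : ℝ, 0 < r → a⁻¹ * (φc r / r) ≤ ψ r ∧ ψ r ≤ a * (φc r / r))
    (φj φjInv : ℝ → ℝ) (hφj0 : φj 0 = 0) (hφjMono : StrictMonoOn φj (Ici 0))
    (hφjInv_nonneg : ∀ t : ℝ, 0 ≤ t → 0 ≤ φjInv t)
    (hφjInv_left : ∀ r : ℝ, 0 ≤ r → φjInv (φj r) = r)
    (hφjInv_right : ∀ t : ℝ, 0 ≤ t → φj (φjInv t) = t)
    (hInvle : ∀ t : ℝ, 1 ≤ t → φjInv t ≤ φcInv t) :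
    ∀ Cs : ℝ, 0 < Cs → ∃ C₀ Cstar : ℝ, 0 < C₀ ∧ 0 < Cstar ∧ ∀ t : ℝ, 1 ≤ t →
      ∃! rs : ℝ, C₀ * φcInv t < rs ∧
        Real.exp (Cs * (rs / ψInv (t / rs))) / (rs / ψInv (t / rs)) =
          Cstar * ψInv (t / rs) / φjInv t ∧
        (∀ r : ℝ, C₀ * φcInv t < r → r < rs →
          Real.exp (Cs * (r / ψInv (t / r))) / (r / ψInv (t / r)) <
            Cstar * ψInv (t / r) / φjInv t) ∧
        (∀ r : ℝ, rs < r →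
          Cstar * ψInv (t / r) / φjInv t <
            Real.exp (Cs * (r / ψInv (t / r))) / (r / ψInv (t / r))) := by
  intro Cs hCs
  have ha0 : (0:ℝ) < a := lt_of_lt_of_le one_pos ha
  set K : ℝ := max 1 Cs⁻¹ with hKdef
  have hK1 : (1:ℝ) ≤ K := le_max_left _ _
  have hKCs : Cs⁻¹ ≤ K := le_max_right _ _
  set C₀ : ℝ := a * (1 + K) with hC₀def
  have hC₀pos : 0 < C₀ := by positivity
  have haC₀ : a ≤ C₀ := le_mul_of_one_le_right ha0.le (by linarith)
  have hKC₀ : K < C₀ := lt_of_lt_of_le (lt_one_add K) (le_mul_of_one_le_left (by linarith) ha)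
  have h1C₀ : 1 ≤ C₀ := hK1.trans hKC₀.le
  set M : ℝ := C₀ + c₁ + 1 with hMdef
  have hMC₀ : C₀ < M := by linarith
  have hMpos : 0 < M := by linarith
  have hβ : 0 < β₁ - 1 := by linarith
  have hbase : 0 < c₁ / (a * M) := by positivity
  have hbase1 : c₁ / (a * M) ≤ 1 := by
    rw [div_le_one (by positivity)]
    calc c₁ ≤ M := by linarith
      _ ≤ a * M := le_mul_of_one_le_left hMpos.le ha
  set ν : ℝ := (c₁ / (a * M)) ^ (β₁ - 1)⁻¹ with hνdef
  have hνpos : 0 < ν := Real.rpow_pos_of_pos hbase _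
  have hν1 : ν ≤ 1 := Real.rpow_le_one hbase.le hbase1 (by positivity)
  have hνpow : ν ^ (β₁ - 1) = c₁ / (a * M) := by
    rw [hνdef, ← Real.rpow_mul hbase.le, inv_mul_cancel₀ hβ.ne', Real.rpow_one]
  set U : ℝ := M / ν with hUdef
  have hUpos : 0 < U := by positivity
  set Cstar : ℝ := Real.exp (Cs * U) / ν + 1 with hCstardef
  have hCstarpos : 0 < Cstar := by positivity
  refine ⟨C₀, Cstar, hC₀pos, hCstarpos, ?_⟩
  intro t ht
  have ht0 : (0:ℝ) < t := lt_of_lt_of_le one_pos ht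
  have hψpos := my_inv_pos ψ ψInv hψ0 hψInv_nonneg hψInv_right
  have hψle := my_inv_le ψ ψInv hψMono hψInv_nonneg hψInv_right
  have hψlt := my_inv_lt ψ ψInv hψMono hψInv_nonneg hψInv_right
  have hψval_pos : ∀ r : ℝ, 0 < r → 0 < ψ r := by
    intro r hr
    have := hψMono (mem_Ici.mpr le_rfl) (mem_Ici.mpr hr.le) hr
    rwa [hψ0] at this
  have hr0pos : 0 < φcInv t := my_inv_pos φc φcInv hφc0 hφcInv_nonneg hφcInv_right t ht0
  have hφcr0 : φc (φcInv t) = t := hφcInv_right t ht0.le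
  have hjpos : 0 < φjInv t := my_inv_pos φj φjInv hφj0 hφjInv_nonneg hφjInv_right t ht0
  have hjle : φjInv t ≤ φcInv t := hInvle t ht
  set r0 : ℝ := φcInv t with hr0def
  have hgpos : ∀ r : ℝ, 0 < r → 0 < ψInv (t / r) := fun r hr => hψpos _ (by positivity)
  -- if a * r0 ≤ r then ψInv (t/r) ≤ r0
  have hg_le_r0 : ∀ r : ℝ, a * r0 ≤ r → ψInv (t / r) ≤ r0 := by
    intro r hr
    have hrpos : 0 < r := lt_of_lt_of_le (by positivity) hr
    have h2 := (hψcomp r0 hr0pos).1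
    rw [hφcr0] at h2
    have h3 : a⁻¹ * (t / r0) = t / (a * r0) := by field_simp
    have h4 : t / r ≤ t / (a * r0) := by
      apply div_le_div_of_nonneg_left ht0.le (by positivity) hr
    have h1 : t / r ≤ ψ r0 := by rw [h3] at h2; linarith
    calc ψInv (t / r) ≤ ψInv (ψ r0) := hψle _ _ (by positivity) h1
      _ = r0 := hψInv_left r0 hr0pos.le
  -- key bounds on the slope variable
  have hkey : ∀ r : ℝ, C₀ * r0 < r →
      0 < ψInv (t / r) ∧ 1 ≤ r / ψInv (t / r) ∧ Cs⁻¹ ≤ r / ψInv (t / r) := by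
    intro r hr
    have hrpos : 0 < r := lt_of_le_of_lt (by positivity) hr
    have hgp := hgpos r hrpos
    have har : a * r0 ≤ r :=
      le_trans (mul_le_mul_of_nonneg_right haC₀ hr0pos.le) hr.le
    have hle := hg_le_r0 r har
    have hur : C₀ ≤ r / ψInv (t / r) := by
      rw [le_div_iff₀ hgp]
      calc C₀ * ψInv (t / r) ≤ C₀ * r0 := mul_le_mul_of_nonneg_left hle hC₀pos.le
        _ ≤ r := hr.le
    exact ⟨hgp, le_trans (hK1.trans hKC₀.le) hur, le_trans (hKCs.trans hKC₀.le) hur⟩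
  -- strict monotonicity of the difference
  have hmono : ∀ x y : ℝ, C₀ * r0 < x → x < y →
      Real.exp (Cs * (x / ψInv (t / x))) / (x / ψInv (t / x)) - Cstar * ψInv (t / x) / φjInv t <
      Real.exp (Cs * (y / ψInv (t / y))) / (y / ψInv (t / y)) - Cstar * ψInv (t / y) / φjInv t := by
    intro x y hx hxy
    obtain ⟨hgx, hux1, huxc⟩ := hkey x hx
    obtain ⟨hgy, huy1, huyc⟩ := hkey y (hx.trans hxy)
    have hxpos : 0 < x := lt_of_le_of_lt (by positivity) hx
    have hypos : 0 < y := hxpos.trans hxy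
    have hglt : ψInv (t / y) < ψInv (t / x) := by
      apply hψlt _ _ (by positivity)
      exact div_lt_div_of_pos_left ht0 hxpos hxy
    have hux0 : (0:ℝ) < x / ψInv (t / x) := lt_of_lt_of_le one_pos hux1
    have huy0 : (0:ℝ) < y / ψInv (t / y) := lt_of_lt_of_le one_pos huy1
    have hult : x / ψInv (t / x) < y / ψInv (t / y) := by
      have h1 : x / ψInv (t / x) < y / ψInv (t / x) := by
        apply div_lt_div_of_pos_right hxy hgx
      have h2 : y / ψInv (t / x) < y / ψInv (t / y) := by
        apply div_lt_div_of_pos_left hypos hgy hglt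
      linarith
    set ux := x / ψInv (t / x)
    set uy := y / ψInv (t / y)
    have hF1 : Real.exp (Cs * ux) / ux ≤ Real.exp (Cs * uy) / uy := by
      rw [div_le_div_iff₀ hux0 huy0]
      have hexp : Cs * (uy - ux) + 1 ≤ Real.exp (Cs * (uy - ux)) := Real.add_one_le_exp _
      have hsplit : Real.exp (Cs * uy) = Real.exp (Cs * ux) * Real.exp (Cs * (uy - ux)) := by
        rw [← Real.exp_add]; ring_nf
      have hcsux : 1 ≤ Cs * ux := by
        have := mul_le_mul_of_nonneg_left huxc hCs.le
        rwa [mul_inv_cancel₀ hCs.ne'] at this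
      have hE : (0:ℝ) < Real.exp (Cs * ux) := Real.exp_pos _
      have h4 : uy ≤ (Cs * (uy - ux) + 1) * ux := by
        have hmul : (1:ℝ) * (uy - ux) ≤ Cs * ux * (uy - ux) :=
          mul_le_mul_of_nonneg_right hcsux (by linarith)
        linarith only [hmul, hult, hux0]
      have h3 : (Cs * (uy - ux) + 1) * ux ≤ Real.exp (Cs * (uy - ux)) * ux :=
        mul_le_mul_of_nonneg_right hexp hux0.le
      rw [hsplit]
      calc Real.exp (Cs * ux) * uy ≤ Real.exp (Cs * ux) * (Real.exp (Cs * (uy - ux)) * ux) := by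
            apply mul_le_mul_of_nonneg_left (h4.trans h3) hE.le
        _ = Real.exp (Cs * ux) * Real.exp (Cs * (uy - ux)) * ux := by ring
    have hF2 : Cstar * ψInv (t / y) / φjInv t < Cstar * ψInv (t / x) / φjInv t := by
      apply div_lt_div_of_pos_right _ hjpos
      exact mul_lt_mul_of_pos_left hglt hCstarpos
    linarith
  -- lower bound for ψInv (t / (M * r0))
  have hνr0pos : 0 < ν * r0 := mul_pos hνpos hr0pos
  have hνr0le : ν * r0 ≤ r0 := mul_le_of_le_one_left hr0pos.le hν1
  have hφcν_pos : 0 < φc (ν * r0) := by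
    have := hφcMono (mem_Ici.mpr le_rfl) (mem_Ici.mpr hνr0pos.le) hνr0pos
    rwa [hφc0] at this
  have hscale := (hφcScale (ν * r0) r0 hνr0pos hνr0le).1
  have hr0ν : r0 / (ν * r0) = ν⁻¹ := by
    rw [mul_comm]; field_simp
  have hp : (0:ℝ) < ν ^ β₁ := Real.rpow_pos_of_pos hνpos _
  have hφcν_le : c₁ * φc (ν * r0) ≤ t * ν ^ β₁ := by
    rw [hr0ν, Real.inv_rpow hνpos.le, hφcr0, ← div_eq_mul_inv] at hscale
    exact (div_le_div_iff₀ hp hφcν_pos).mp hscale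
  have hψν := (hψcomp (ν * r0) hνr0pos).2
  have hsplitν : ν ^ β₁ = c₁ / (a * M) * ν := by
    have h7 : ν ^ β₁ = ν ^ (β₁ - 1) * ν ^ (1:ℝ) := by
      rw [← Real.rpow_add hνpos]; ring_nf
    rw [h7, hνpow, Real.rpow_one]
  have hψν2 : ψ (ν * r0) ≤ t / (M * r0) := by
    have h8 : φc (ν * r0) ≤ t * ν ^ β₁ / c₁ := by
      rw [le_div_iff₀ hc₁]; linarith
    have h9 : a * (φc (ν * r0) / (ν * r0)) ≤ a * ((t * ν ^ β₁ / c₁) / (ν * r0)) := by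
      apply mul_le_mul_of_nonneg_left _ ha0.le
      apply div_le_div_of_nonneg_right h8 hνr0pos.le
    have h10 : a * ((t * ν ^ β₁ / c₁) / (ν * r0)) = t / (M * r0) := by
      rw [hsplitν]
      field_simp
      try ring
    linarith
  have hg1 : ν * r0 ≤ ψInv (t / (M * r0)) := by
    have h11 := hψle (ψ (ν * r0)) (t / (M * r0)) (hψval_pos _ hνr0pos).le hψν2
    rwa [hψInv_left (ν * r0) hνr0pos.le] at h11
  -- D (M * r0) < 0
  have hC₀r₁ : C₀ * r0 < M * r0 := mul_lt_mul_of_pos_right hMC₀ hr0pos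
  have hr₁pos : 0 < M * r0 := mul_pos hMpos hr0pos
  obtain ⟨hg1pos, hu11, _⟩ := hkey (M * r0) hC₀r₁
  have hu1U : M * r0 / ψInv (t / (M * r0)) ≤ U := by
    have hUeq : U = M * r0 / (ν * r0) := by
      rw [hUdef]; field_simp
    rw [hUeq]
    apply div_le_div_of_nonneg_left hr₁pos.le hνr0pos hg1
  have hD1 : Real.exp (Cs * (M * r0 / ψInv (t / (M * r0)))) / (M * r0 / ψInv (t / (M * r0))) <
      Cstar * ψInv (t / (M * r0)) / φjInv t := by
    have hl : Real.exp (Cs * (M * r0 / ψInv (t / (M * r0)))) / (M * r0 / ψInv (t / (M * r0))) ≤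
        Real.exp (Cs * U) := by
      calc Real.exp (Cs * (M * r0 / ψInv (t / (M * r0)))) / (M * r0 / ψInv (t / (M * r0)))
          ≤ Real.exp (Cs * (M * r0 / ψInv (t / (M * r0)))) / 1 := by
            apply div_le_div_of_nonneg_left (Real.exp_pos _).le one_pos hu11
        _ = Real.exp (Cs * (M * r0 / ψInv (t / (M * r0)))) := div_one _
        _ ≤ Real.exp (Cs * U) :=
            Real.exp_le_exp.mpr (mul_le_mul_of_nonneg_left hu1U hCs.le)
    have h8 : Cstar * (ν * r0) / r0 ≤ Cstar * ψInv (t / (M * r0)) / φjInv t := by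
      gcongr
    have h9 : Cstar * (ν * r0) / r0 = Cstar * ν := by
      field_simp
      try ring
    have h10 : Real.exp (Cs * U) < Cstar * ν := by
      have h12 : Cstar * ν = Real.exp (Cs * U) + ν := by
        rw [hCstardef]; field_simp; try ring
      rw [h12]; linarith
    calc Real.exp (Cs * (M * r0 / ψInv (t / (M * r0)))) / (M * r0 / ψInv (t / (M * r0)))
        ≤ Real.exp (Cs * U) := hl
      _ < Cstar * ν := h10
      _ = Cstar * (ν * r0) / r0 := h9.symm
      _ ≤ Cstar * ψInv (t / (M * r0)) / φjInv t := h8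
  -- D r₂ > 0
  set ε : ℝ := Cs * φjInv t / (2 * Cstar) with hεdef
  have hεpos : 0 < ε := by positivity
  have hψεpos : 0 < ψ ε := hψval_pos ε hεpos
  set r₂ : ℝ := max (M * r0 + 1) (t / ψ ε + 1) with hr₂def
  have hr₂1 : M * r0 < r₂ := lt_of_lt_of_le (by linarith) (le_max_left _ _)
  have hr₂2 : t / ψ ε < r₂ := lt_of_lt_of_le (by linarith) (le_max_right _ _)
  have hr₂C₀ : C₀ * r0 < r₂ := hC₀r₁.trans hr₂1
  obtain ⟨hg2pos, hu21, _⟩ := hkey r₂ hr₂C₀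
  have hr₂pos : 0 < r₂ := hr₁pos.trans hr₂1
  have htr₂ : t / r₂ < ψ ε := by
    rw [div_lt_iff₀ hr₂pos]
    rw [div_lt_iff₀ hψεpos] at hr₂2
    linarith [mul_comm r₂ (ψ ε)]
  have hg2ε : ψInv (t / r₂) < ε := by
    have h13 := hψlt (t / r₂) (ψ ε) (by positivity) htr₂
    rwa [hψInv_left ε hεpos.le] at h13
  have hu20 : (0:ℝ) < r₂ / ψInv (t / r₂) := lt_of_lt_of_le one_pos hu21
  have hD2 : Cstar * ψInv (t / r₂) / φjInv t <
      Real.exp (Cs * (r₂ / ψInv (t / r₂))) / (r₂ / ψInv (t / r₂)) := by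
    have h11 : Cstar * ψInv (t / r₂) / φjInv t < Cstar * ε / φjInv t := by
      apply div_lt_div_of_pos_right _ hjpos
      exact mul_lt_mul_of_pos_left hg2ε hCstarpos
    have h12 : Cstar * ε / φjInv t = Cs / 2 := by
      rw [hεdef]; field_simp; try ring
    have h13 : Cs ≤ Real.exp (Cs * (r₂ / ψInv (t / r₂))) / (r₂ / ψInv (t / r₂)) := by
      rw [le_div_iff₀ hu20]
      have := Real.add_one_le_exp (Cs * (r₂ / ψInv (t / r₂)))
      linarith
    linarith
  -- continuity
  have hcont : ContinuousOn (fun r => Real.exp (Cs * (r / ψInv (t / r))) / (r / ψInv (t / r)) -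
      Cstar * ψInv (t / r) / φjInv t) (Icc (M * r0) r₂) := by
    have hgc : ContinuousOn (fun r => ψInv (t / r)) (Icc (M * r0) r₂) := by
      intro r hr
      have hrpos : 0 < r := lt_of_lt_of_le hr₁pos hr.1
      have h1 : ContinuousAt (fun r : ℝ => t / r) r := continuousAt_const.div continuousAt_id hrpos.ne'
      have h2 : ContinuousAt ψInv (t / r) :=
        my_inv_contAt ψ ψInv hψ0 hψMono hψInv_nonneg hψInv_left hψInv_right (t / r) (by positivity)
      exact (h2.comp h1).continuousWithinAt
    have hgne : ∀ r ∈ Icc (M * r0) r₂, ψInv (t / r) ≠ 0 :=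
      fun r hr => (hgpos r (lt_of_lt_of_le hr₁pos hr.1)).ne'
    have huc : ContinuousOn (fun r => r / ψInv (t / r)) (Icc (M * r0) r₂) :=
      continuousOn_id.div hgc hgne
    have hune : ∀ r ∈ Icc (M * r0) r₂, r / ψInv (t / r) ≠ 0 := by
      intro r hr
      have hrpos : 0 < r := lt_of_lt_of_le hr₁pos hr.1
      exact (div_pos hrpos (hgpos r hrpos)).ne'
    apply ContinuousOn.sub
    · exact (Real.continuous_exp.comp_continuousOn (continuousOn_const.mul huc)).div huc hune
    · exact (continuousOn_const.mul hgc).div_const _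
  exact my_crossing (fun r => Real.exp (Cs * (r / ψInv (t / r))) / (r / ψInv (t / r)))
    (fun r => Cstar * ψInv (t / r) / φjInv t) (C₀ * r0) (M * r0) r₂
    hmono hC₀r₁ hr₂1.le hD1 hD2 hcont
end

section
/- Let φ : [0,∞) → [0,∞) be a strictly increasing function with φ(R)/φ(r) ≤ c₂ (R/r)^{β₂} for all 0 < r ≤ R, for some constants c₂ > 0 and β₂ > 1. Let ψ : [0,∞) → [0,∞) be a strictly increasing bijection with a^{-1} φ(r)/r ≤ ψ(r) ≤ a φ(r)/r for all r > 0, for some a ≥ 1. Then there exists a constant c > 0 such that for all t, r > 0 with φ(r) ≥ a² t, one has ψ^{-1}(t/r) ≤ r and r/ψ^{-1}(t/r) ≥ c (φ(r)/t)^{1/(β₂-1)}. -/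
open Set Real

/-- if `φ(r) ≥ a² t` then `ψ⁻¹(t/r) ≤ r` and
`r/ψ⁻¹(t/r) ≥ c (φ(r)/t)^{1/(β₂-1)}`. -/
theorem stmt_13 (φ : ℝ → ℝ) (hφMono : StrictMonoOn φ (Ici 0))
    (hφnonneg : ∀ r : ℝ, 0 ≤ r → 0 ≤ φ r)
    (c₂ β₂ : ℝ) (hc₂ : 0 < c₂) (hβ₂ : 1 < β₂)
    (hscale : ∀ r R : ℝ, 0 < r → r ≤ R → φ R / φ r ≤ c₂ * (R / r) ^ β₂)
    (ψ ψInv : ℝ → ℝ) (a : ℝ) (ha : 1 ≤ a)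
    (hψ0 : ψ 0 = 0) (hψMono : StrictMonoOn ψ (Ici 0))
    (hψInv_nonneg : ∀ t : ℝ, 0 ≤ t → 0 ≤ ψInv t)
    (hψInv_left : ∀ r : ℝ, 0 ≤ r → ψInv (ψ r) = r)
    (hψInv_right : ∀ t : ℝ, 0 ≤ t → ψ (ψInv t) = t)
    (hψcomp : ∀ r : ℝ, 0 < r → a⁻¹ * (φ r / r) ≤ ψ r ∧ ψ r ≤ a * (φ r / r)) :
    ∃ c : ℝ, 0 < c ∧ ∀ t r : ℝ, 0 < t → 0 < r → a ^ 2 * t ≤ φ r →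
      ψInv (t / r) ≤ r ∧ c * (φ r / t) ^ (1 / (β₂ - 1)) ≤ r / ψInv (t / r) := by
  have ha0 : (0:ℝ) < a := lt_of_lt_of_le one_pos ha
  have hca : 0 < c₂ * a := mul_pos hc₂ ha0
  have hβ : 0 < β₂ - 1 := by linarith
  refine ⟨((c₂ * a)⁻¹) ^ (1 / (β₂ - 1)), Real.rpow_pos_of_pos (by positivity) _, ?_⟩
  intro t r ht hr hφa
  have hφr : 0 < φ r := lt_of_lt_of_le (by positivity) hφa
  have htr : 0 < t / r := div_pos ht hr
  set s := ψInv (t / r) with hs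
  have hs0 : 0 ≤ s := hψInv_nonneg _ htr.le
  have hψs : ψ s = t / r := hψInv_right _ htr.le
  have hspos : 0 < s := by
    rcases hs0.lt_or_eq with h | h
    · exact h
    · exfalso; rw [← h, hψ0] at hψs; linarith
  -- first part : s ≤ r
  have h1 : t / r ≤ ψ r := by
    have h2 : a * (t / r) ≤ a⁻¹ * (φ r / r) := by
      rw [mul_div_assoc', inv_mul_eq_div, div_div, div_le_div_iff₀ hr (by positivity)]
      nlinarith
    have h3 : t / r ≤ a * (t / r) := le_mul_of_one_le_left htr.le ha
    linarith [(hψcomp r hr).1]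
  have hsr : s ≤ r := by
    rw [← hψMono.le_iff_le (mem_Ici.2 hs0) (mem_Ici.2 hr.le), hψs]
    exact h1
  refine ⟨hsr, ?_⟩
  -- second part
  have hrs : 0 < r / s := div_pos hr hspos
  have hφs : 0 < φ s := by
    have h4 := (hψcomp s hspos).2
    rw [hψs, mul_div_assoc', le_div_iff₀ hspos] at h4
    nlinarith [mul_pos htr hspos]
  have hupper : φ s ≤ a * s * (t / r) := by
    have h5 := (hψcomp s hspos).1
    rw [hψs, inv_mul_le_iff₀ ha0, div_le_iff₀ hspos] at h5
    nlinarith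
  have hsc := hscale s r hspos hsr
  rw [div_le_iff₀ hφs] at hsc
  have key : φ r ≤ c₂ * a * t * (r / s) ^ (β₂ - 1) := by
    have h6 : φ r ≤ c₂ * (r / s) ^ β₂ * (a * s * (t / r)) := by
      calc φ r ≤ c₂ * (r / s) ^ β₂ * φ s := hsc
      _ ≤ c₂ * (r / s) ^ β₂ * (a * s * (t / r)) := by
          apply mul_le_mul_of_nonneg_left hupper
          positivity
    have h7 : (r / s) ^ (β₂ - 1) = (r / s) ^ β₂ * (s / r) := by
      rw [Real.rpow_sub hrs, Real.rpow_one]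
      field_simp
    rw [h7]
    calc φ r ≤ c₂ * (r / s) ^ β₂ * (a * s * (t / r)) := h6
    _ = c₂ * a * t * ((r / s) ^ β₂ * (s / r)) := by field_simp
  have key2 : φ r / (c₂ * a * t) ≤ (r / s) ^ (β₂ - 1) := by
    rw [div_le_iff₀ (by positivity)]
    linarith [key]
  have hmain := Real.rpow_le_rpow (by positivity) key2 (by positivity : (0:ℝ) ≤ 1 / (β₂ - 1))
  rw [← Real.rpow_mul hrs.le, mul_one_div, div_self (ne_of_gt hβ), Real.rpow_one] at hmain
  calc (c₂ * a)⁻¹ ^ (1 / (β₂ - 1)) * (φ r / t) ^ (1 / (β₂ - 1))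
      = ((c₂ * a)⁻¹ * (φ r / t)) ^ (1 / (β₂ - 1)) :=
        (Real.mul_rpow (by positivity) (by positivity)).symm
    _ = (φ r / (c₂ * a * t)) ^ (1 / (β₂ - 1)) := by
        rw [show (c₂ * a)⁻¹ * (φ r / t) = φ r / (c₂ * a * t) by field_simp]
    _ ≤ r / s := hmain
end

section
/- Let (M,d) be a metric space and μ a Borel measure on M such that V(x,r) := μ(B(x,r)) is finite and strictly positive for all x ∈ M and r > 0, and suppose there exist constants C_μ > 0 and d₂ > 0 such that V(x,R)/V(x,r) ≤ C_μ (R/r)^{d₂} for all x ∈ M and 0 < r ≤ R. Let β > 1, γ > 0 and c > 0. Then there exists a constant C > 0 such that for all x, y ∈ M with d(x,y) > 0, ∫₀^∞ (1/V(x, u^{1/β})) · exp( - c (d(x,y)^β / u)^{1/(β-1)} ) · u^{-1-γ} du ≤ C / ( V(x, d(x,y)) · d(x,y)^{βγ} ). -/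
open MeasureTheory Set Real Metric

/-- under volume doubling, the subordination integral is bounded above by
`C/(V(x,d(x,y)) d(x,y)^{βγ})`. -/
theorem stmt_14 {M : Type*} [MetricSpace M] [MeasurableSpace M] [BorelSpace M]
    (μ : Measure M) (V : M → ℝ → ℝ)
    (hV : ∀ x r, V x r = (μ (ball x r)).toReal)
    (hfin : ∀ (x : M) (r : ℝ), 0 < r → μ (ball x r) < ⊤)
    (hpos : ∀ (x : M) (r : ℝ), 0 < r → 0 < μ (ball x r))
    (Cμ d₂ : ℝ) (hCμ : 0 < Cμ) (hd₂ : 0 < d₂)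
    (hVD : ∀ (x : M) (r R : ℝ), 0 < r → r ≤ R → V x R / V x r ≤ Cμ * (R / r) ^ d₂)
    (β γ c : ℝ) (hβ : 1 < β) (hγ : 0 < γ) (hc : 0 < c) :
    ∃ C : ℝ, 0 < C ∧ ∀ x y : M, 0 < dist x y →
      (∫⁻ u in Ioi (0 : ℝ),
        ENNReal.ofReal ((1 / V x (u ^ (1 / β))) *
          Real.exp (-(c * ((dist x y ^ β / u) ^ (1 / (β - 1))))) * u ^ (-1 - γ))) ≤
      ENNReal.ofReal (C / (V x (dist x y) * dist x y ^ (β * γ))) := by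
  have hβ0 : (0:ℝ) < β := by linarith
  have hβ1 : (0:ℝ) < β - 1 := by linarith
  obtain ⟨n, hn⟩ : ∃ n : ℕ, (β - 1) * (d₂ / β + γ) < n := exists_nat_gt _
  set θ : ℝ := (n:ℝ) / (β - 1) - (d₂ / β + γ) with hθdef
  have hθ : 0 < θ := by
    rw [hθdef, sub_pos, lt_div_iff₀ hβ1]
    nlinarith
  set K : ℝ := Cμ * (Nat.factorial n : ℝ) / c ^ n with hKdef
  have hK : 0 < K := by
    apply div_pos (mul_pos hCμ _) (pow_pos hc n)
    exact_mod_cast Nat.factorial_pos n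
  refine ⟨K / θ + 1 / γ, by positivity, fun x y hxy => ?_⟩
  set D : ℝ := dist x y with hDdef
  set A : ℝ := D ^ β with hAdef
  have hA : 0 < A := Real.rpow_pos_of_pos hxy β
  have hVpos : ∀ r : ℝ, 0 < r → 0 < V x r := fun r hr => by
    rw [hV]; exact ENNReal.toReal_pos (hpos x r hr).ne' (hfin x r hr).ne
  have hVD0 : 0 < V x D := hVpos D hxy
  have hVmono : ∀ r R : ℝ, 0 < r → r ≤ R → V x r ≤ V x R := fun r R hr hrR => by
    rw [hV, hV]
    exact ENNReal.toReal_mono (hfin x R (hr.trans_le hrR)).ne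
      (measure_mono (ball_subset_ball hrR))
  have hroot : (A : ℝ) ^ (1/β) = D := by
    rw [hAdef, one_div, Real.rpow_rpow_inv dist_nonneg hβ0.ne']
  rw [← Ioc_union_Ioi_eq_Ioi hA.le,
    lintegral_union measurableSet_Ioi (Ioc_disjoint_Ioi le_rfl)]
  -- Piece 1 : on Ioc 0 A
  have piece1 : (∫⁻ u in Ioc (0:ℝ) A,
      ENNReal.ofReal ((1 / V x (u ^ (1 / β))) *
        Real.exp (-(c * ((dist x y ^ β / u) ^ (1 / (β - 1))))) * u ^ (-1 - γ))) ≤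
      ENNReal.ofReal ((K / V x D) * (A ^ (-(γ + θ)) * (A ^ θ / θ))) := by
    have hbd : ∀ u ∈ Ioc (0:ℝ) A,
        (1 / V x (u ^ (1 / β))) *
          Real.exp (-(c * ((dist x y ^ β / u) ^ (1 / (β - 1))))) * u ^ (-1 - γ) ≤
        (K / V x D) * (A ^ (-(γ + θ)) * u ^ (θ - 1)) := by
      intro u hu
      obtain ⟨hu0, huA⟩ := hu
      have hr : 0 < u ^ (1/β) := Real.rpow_pos_of_pos hu0 _
      have hrD : u ^ (1/β) ≤ D := by
        rw [← hroot]
        exact Real.rpow_le_rpow hu0.le huA (by positivity)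
      have h1 : 1 / V x (u ^ (1/β)) ≤ Cμ * (D / u ^ (1/β)) ^ d₂ / V x D := by
        have hdb := hVD x (u ^ (1/β)) D hr hrD
        have hVu : 0 < V x (u ^ (1/β)) := hVpos _ hr
        rw [div_le_div_iff₀ hVu hVD0]
        calc 1 * V x D = V x D / V x (u ^ (1/β)) * V x (u ^ (1/β)) := by
              field_simp
          _ ≤ Cμ * (D / u ^ (1/β)) ^ d₂ * V x (u ^ (1/β)) :=
              mul_le_mul_of_nonneg_right hdb hVu.le
      have hz : 0 < c * ((A / u) ^ (1 / (β - 1))) :=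
        mul_pos hc (Real.rpow_pos_of_pos (div_pos hA hu0) _)
      have h2 : Real.exp (-(c * ((dist x y ^ β / u) ^ (1 / (β - 1))))) ≤
          ((Nat.factorial n : ℝ) / c ^ n) * (u / A) ^ ((n:ℝ) / (β - 1)) := by
        have hexp : (c * ((A / u) ^ (1 / (β - 1)))) ^ n / (Nat.factorial n : ℝ) ≤
            Real.exp (c * ((A / u) ^ (1 / (β - 1)))) :=
          Real.pow_div_factorial_le_exp _ hz.le n
        have hpow : (c * ((A / u) ^ (1 / (β - 1)))) ^ n
            = c ^ n * (A / u) ^ ((n:ℝ) / (β - 1)) := by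
          rw [mul_pow, ← Real.rpow_natCast ((A/u) ^ (1/(β-1))) n,
            ← Real.rpow_mul (div_pos hA hu0).le]
          ring_nf
        have hAu : (A / u) ^ ((n:ℝ) / (β - 1)) = ((u / A) ^ ((n:ℝ) / (β - 1)))⁻¹ := by
          rw [← Real.inv_rpow (div_pos hu0 hA).le, inv_div]
        rw [show (dist x y ^ β / u) = A / u by rw [hAdef, hDdef],
          Real.exp_neg]
        rw [hpow, hAu] at hexp
        have hcn : (0:ℝ) < c ^ n := pow_pos hc n
        have hfa : (0:ℝ) < (Nat.factorial n : ℝ) := by exact_mod_cast Nat.factorial_pos n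
        have huA0 : (0:ℝ) < (u / A) ^ ((n:ℝ) / (β - 1)) :=
          Real.rpow_pos_of_pos (div_pos hu0 hA) _
        calc (Real.exp (c * ((A / u) ^ (1 / (β - 1)))))⁻¹
            ≤ (c ^ n * ((u / A) ^ ((n:ℝ) / (β - 1)))⁻¹ / (Nat.factorial n : ℝ))⁻¹ :=
              inv_anti₀ (by positivity) hexp
          _ = ((Nat.factorial n : ℝ) / c ^ n) * (u / A) ^ ((n:ℝ) / (β - 1)) := by
              field_simp
      -- combine
      have hDr : (D / u ^ (1/β)) ^ d₂ = (A / u) ^ (d₂ / β) := by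
        rw [← hroot, ← Real.div_rpow hA.le hu0.le, ← Real.rpow_mul (div_pos hA hu0).le]
        ring_nf
      have hu1γ : (0:ℝ) ≤ u ^ (-1 - γ) := Real.rpow_nonneg hu0.le _
      have hexp0 : (0:ℝ) ≤ Real.exp (-(c * ((dist x y ^ β / u) ^ (1 / (β - 1))))) :=
        (Real.exp_pos _).le
      calc (1 / V x (u ^ (1 / β))) *
            Real.exp (-(c * ((dist x y ^ β / u) ^ (1 / (β - 1))))) * u ^ (-1 - γ)
          ≤ (Cμ * (D / u ^ (1/β)) ^ d₂ / V x D) *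
            (((Nat.factorial n : ℝ) / c ^ n) * (u / A) ^ ((n:ℝ) / (β - 1))) * u ^ (-1 - γ) := by
            apply mul_le_mul_of_nonneg_right _ hu1γ
            apply mul_le_mul h1 h2 hexp0
            positivity
        _ = (K / V x D) * (A ^ (-(γ + θ)) * u ^ (θ - 1)) := by
            have ha1 : (A / u) ^ (d₂ / β) = A ^ (d₂ / β) * u ^ (-(d₂ / β)) := by
              rw [Real.div_rpow hA.le hu0.le, Real.rpow_neg hu0.le, div_eq_mul_inv]
            have ha2 : (u / A) ^ ((n:ℝ) / (β - 1)) =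
                u ^ ((n:ℝ) / (β - 1)) * A ^ (-((n:ℝ) / (β - 1))) := by
              rw [Real.div_rpow hu0.le hA.le, Real.rpow_neg hA.le, div_eq_mul_inv]
            have ha3 : A ^ (-(γ + θ)) = A ^ (d₂ / β) * A ^ (-((n:ℝ) / (β - 1))) := by
              rw [← Real.rpow_add hA]; congr 1; rw [hθdef]; ring
            have ha4 : u ^ (θ - 1) =
                u ^ (-(d₂ / β)) * (u ^ ((n:ℝ) / (β - 1)) * u ^ (-1 - γ)) := by
              rw [← Real.rpow_add hu0, ← Real.rpow_add hu0]; congr 1; rw [hθdef]; ring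
            rw [hDr, ha1, ha2, ha3, ha4, hKdef]
            ring
    calc (∫⁻ u in Ioc (0:ℝ) A,
        ENNReal.ofReal ((1 / V x (u ^ (1 / β))) *
          Real.exp (-(c * ((dist x y ^ β / u) ^ (1 / (β - 1))))) * u ^ (-1 - γ)))
        ≤ ∫⁻ u in Ioc (0:ℝ) A,
            ENNReal.ofReal ((K / V x D) * (A ^ (-(γ + θ)) * u ^ (θ - 1))) :=
          setLIntegral_mono' measurableSet_Ioc
            (fun u hu => ENNReal.ofReal_le_ofReal (hbd u hu))
      _ = ENNReal.ofReal ((K / V x D) * (A ^ (-(γ + θ)) * (A ^ θ / θ))) := by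
          have hint : IntegrableOn (fun u : ℝ => (K / V x D) *
              (A ^ (-(γ + θ)) * u ^ (θ - 1))) (Ioc (0:ℝ) A) := by
            apply Integrable.const_mul
            apply Integrable.const_mul
            exact (intervalIntegrable_iff_integrableOn_Ioc_of_le hA.le).mp
              (intervalIntegral.intervalIntegrable_rpow' (by linarith))
          rw [← ofReal_integral_eq_lintegral_ofReal hint]
          · congr 1
            rw [MeasureTheory.integral_const_mul, MeasureTheory.integral_const_mul]
            congr 2
            rw [← intervalIntegral.integral_of_le hA.le,
              integral_rpow (Or.inl (by linarith : (-1:ℝ) < θ - 1)),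
              Real.zero_rpow (by linarith : θ - 1 + 1 ≠ 0),
              show θ - 1 + 1 = θ by ring]
            ring
          · filter_upwards [ae_restrict_mem measurableSet_Ioc] with u hu
            have : (0:ℝ) ≤ u ^ (θ - 1) := Real.rpow_nonneg hu.1.le _
            positivity
  -- Piece 2 : on Ioi A
  have piece2 : (∫⁻ u in Ioi A,
      ENNReal.ofReal ((1 / V x (u ^ (1 / β))) *
        Real.exp (-(c * ((dist x y ^ β / u) ^ (1 / (β - 1))))) * u ^ (-1 - γ))) ≤
      ENNReal.ofReal ((1 / V x D) * (A ^ (-γ) / γ)) := by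
    have hbd : ∀ u ∈ Ioi A,
        (1 / V x (u ^ (1 / β))) *
          Real.exp (-(c * ((dist x y ^ β / u) ^ (1 / (β - 1))))) * u ^ (-1 - γ) ≤
        (1 / V x D) * u ^ (-1 - γ) := by
      intro u hu
      have hu0 : 0 < u := hA.trans hu
      have hDr : D ≤ u ^ (1/β) := by
        rw [← hroot]
        exact Real.rpow_le_rpow hA.le (le_of_lt hu) (by positivity)
      have hVu : 0 < V x (u ^ (1/β)) := hVpos _ (Real.rpow_pos_of_pos hu0 _)
      have h1 : 1 / V x (u ^ (1/β)) ≤ 1 / V x D :=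
        one_div_le_one_div_of_le hVD0 (hVmono D _ hxy hDr)
      have h2 : Real.exp (-(c * ((dist x y ^ β / u) ^ (1 / (β - 1))))) ≤ 1 := by
        apply Real.exp_le_one_iff.mpr
        have : (0:ℝ) ≤ (dist x y ^ β / u) ^ (1 / (β - 1)) :=
          Real.rpow_nonneg (by positivity) _
        nlinarith
      have hu1γ : (0:ℝ) ≤ u ^ (-1 - γ) := Real.rpow_nonneg hu0.le _
      calc (1 / V x (u ^ (1 / β))) *
            Real.exp (-(c * ((dist x y ^ β / u) ^ (1 / (β - 1))))) * u ^ (-1 - γ)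
          ≤ (1 / V x D) * 1 * u ^ (-1 - γ) := by
            apply mul_le_mul_of_nonneg_right _ hu1γ
            exact mul_le_mul h1 h2 (Real.exp_pos _).le (by positivity)
        _ = (1 / V x D) * u ^ (-1 - γ) := by ring
    calc (∫⁻ u in Ioi A,
        ENNReal.ofReal ((1 / V x (u ^ (1 / β))) *
          Real.exp (-(c * ((dist x y ^ β / u) ^ (1 / (β - 1))))) * u ^ (-1 - γ)))
        ≤ ∫⁻ u in Ioi A, ENNReal.ofReal ((1 / V x D) * u ^ (-1 - γ)) :=
          setLIntegral_mono' measurableSet_Ioi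
            (fun u hu => ENNReal.ofReal_le_ofReal (hbd u hu))
      _ = ENNReal.ofReal ((1 / V x D) * (A ^ (-γ) / γ)) := by
          have hint : IntegrableOn (fun u : ℝ => (1 / V x D) * u ^ (-1 - γ)) (Ioi A) :=
            (integrableOn_Ioi_rpow_of_lt (by linarith) hA).const_mul _
          rw [← ofReal_integral_eq_lintegral_ofReal hint]
          · congr 1
            rw [MeasureTheory.integral_const_mul,
              integral_Ioi_rpow_of_lt (by linarith : (-1 - γ) < -1) hA]
            congr 1
            rw [show (-1 - γ + 1) = -γ by ring]
            field_simp
          · filter_upwards [ae_restrict_mem measurableSet_Ioi] with u hu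
            have hu0 : 0 < u := hA.trans hu
            have : (0:ℝ) ≤ u ^ (-1 - γ) := Real.rpow_nonneg hu0.le _
            positivity
  refine le_trans (add_le_add piece1 piece2) ?_
  rw [← ENNReal.ofReal_add (by positivity) (by positivity)]
  apply ENNReal.ofReal_le_ofReal
  have hDβγ : D ^ (β * γ) = A ^ γ := by
    rw [hAdef, ← Real.rpow_mul dist_nonneg]
  rw [hDβγ]
  have hAγ : 0 < A ^ γ := Real.rpow_pos_of_pos hA γ
  have key : A ^ (-(γ + θ)) * (A ^ θ / θ) = A ^ (-γ) / θ := by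
    rw [div_eq_mul_inv, ← mul_assoc, ← Real.rpow_add hA,
      show (-(γ + θ) + θ) = -γ by ring, ← div_eq_mul_inv]
  rw [key]
  have hAneg : A ^ (-γ) = (A ^ γ)⁻¹ := by rw [Real.rpow_neg hA.le]
  rw [hAneg]
  have : (K / V x D) * ((A ^ γ)⁻¹ / θ) + (1 / V x D) * ((A ^ γ)⁻¹ / γ)
      = (K / θ + 1 / γ) / (V x D * A ^ γ) := by
    field_simp
  rw [this]
end

section
/- Let (M,d) be a metric space and μ a Borel measure on M such that V(x,r) := μ(B(x,r)) is finite and strictly positive for all x ∈ M and r > 0. Let β > 1, γ > 0 and c > 0. Then there exists a constant C' > 0 such that for all x, y ∈ M with d(x,y) > 0, ∫₀^{d(x,y)^β} (1/V(x, u^{1/β})) · exp( - c (d(x,y)^β / u)^{1/(β-1)} ) · u^{-1-γ} du ≥ C' / ( V(x, d(x,y)) · d(x,y)^{βγ} ). -/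
open MeasureTheory Set Real Metric

/-- lower bound for the truncated subordination integral, valid without
any doubling assumption. -/
theorem stmt_15 {M : Type*} [MetricSpace M] [MeasurableSpace M] [BorelSpace M]
    (μ : Measure M) (V : M → ℝ → ℝ)
    (hV : ∀ x r, V x r = (μ (ball x r)).toReal)
    (hfin : ∀ (x : M) (r : ℝ), 0 < r → μ (ball x r) < ⊤)
    (hpos : ∀ (x : M) (r : ℝ), 0 < r → 0 < μ (ball x r))
    (β γ c : ℝ) (hβ : 1 < β) (hγ : 0 < γ) (hc : 0 < c) :
    ∃ C' : ℝ, 0 < C' ∧ ∀ x y : M, 0 < dist x y →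
      ENNReal.ofReal (C' / (V x (dist x y) * dist x y ^ (β * γ))) ≤
      ∫⁻ u in Ioc (0 : ℝ) (dist x y ^ β),
        ENNReal.ofReal ((1 / V x (u ^ (1 / β))) *
          Real.exp (-(c * ((dist x y ^ β / u) ^ (1 / (β - 1))))) * u ^ (-1 - γ)) := by
  have hβ0 : (0:ℝ) < β := by linarith
  have hβ10 : (0:ℝ) < β - 1 := by linarith
  refine ⟨Real.exp (-(c * 2 ^ (1/(β-1)))) / 2, by positivity, ?_⟩
  intro x y hd
  set D := dist x y with hDdef
  have hA : 0 < D ^ β := Real.rpow_pos_of_pos hd β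
  have hVD : 0 < V x D := by
    rw [hV]; exact ENNReal.toReal_pos (hpos x D hd).ne' (hfin x D hd).ne
  set k : ℝ := (1 / V x D) * Real.exp (-(c * 2 ^ (1/(β-1)))) * (D^β) ^ (-1-γ) with hk
  have hk0 : 0 ≤ k := by positivity
  have key : ∀ u ∈ Ioc (D^β/2) (D^β), k ≤
      (1 / V x (u ^ (1 / β))) * Real.exp (-(c * ((D ^ β / u) ^ (1 / (β - 1))))) * u ^ (-1 - γ) := by
    intro u hu
    obtain ⟨hu1, hu2⟩ := hu
    have hu0 : 0 < u := lt_trans (by positivity) hu1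
    have hr : 0 < u ^ (1/β) := Real.rpow_pos_of_pos hu0 _
    have hVu : 0 < V x (u ^ (1/β)) := by
      rw [hV]; exact ENNReal.toReal_pos (hpos x _ hr).ne' (hfin x _ hr).ne
    have h1 : 1 / V x D ≤ 1 / V x (u ^ (1/β)) := by
      apply one_div_le_one_div_of_le hVu
      rw [hV, hV]
      have hball : ball x (u ^ (1/β)) ⊆ ball x D := by
        apply Metric.ball_subset_ball
        calc u ^ (1/β) ≤ (D^β) ^ (1/β) :=
              Real.rpow_le_rpow hu0.le hu2 (by positivity)
          _ = D := by
              rw [← Real.rpow_mul hd.le, mul_one_div, div_self hβ0.ne', Real.rpow_one]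
      exact ENNReal.toReal_mono (hfin x D hd).ne (measure_mono hball)
    have h2 : Real.exp (-(c * 2 ^ (1/(β-1)))) ≤
        Real.exp (-(c * ((D ^ β / u) ^ (1 / (β - 1))))) := by
      apply Real.exp_le_exp.mpr
      apply neg_le_neg
      apply mul_le_mul_of_nonneg_left _ hc.le
      apply Real.rpow_le_rpow (by positivity) _ (by positivity)
      rw [div_le_iff₀ hu0]
      linarith
    have h3 : (D^β) ^ (-1-γ) ≤ u ^ (-1-γ) :=
      Real.rpow_le_rpow_of_nonpos hu0 hu2 (by linarith)
    calc k ≤ (1 / V x (u ^ (1/β))) * Real.exp (-(c * ((D ^ β / u) ^ (1 / (β - 1))))) *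
          (D^β) ^ (-1-γ) := by
          apply mul_le_mul (mul_le_mul h1 h2 (Real.exp_pos _).le (by positivity))
            le_rfl (by positivity) (by positivity)
      _ ≤ _ := by
          apply mul_le_mul_of_nonneg_left h3 (by positivity)
  have eq1 : Real.exp (-(c * 2 ^ (1/(β-1)))) / 2 / (V x D * D ^ (β * γ)) =
      k * (D^β - D^β/2) := by
    have hDβγ : (D^β) ^ (-1-γ) * (D^β) = (D ^ (β*γ))⁻¹ := by
      rw [← Real.rpow_mul hd.le, ← Real.rpow_add hd,
        show β*(-1-γ)+β = -(β*γ) by ring, Real.rpow_neg hd.le]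
    have h2 : D^β - D^β/2 = D^β / 2 := by ring
    have h3 : k * (D^β/2) = (1 / V x D) * Real.exp (-(c * 2 ^ (1/(β-1)))) / 2 *
        ((D^β) ^ (-1-γ) * (D^β)) := by rw [hk]; ring
    rw [h2, h3, hDβγ]
    have hDb : (0:ℝ) < D ^ (β*γ) := Real.rpow_pos_of_pos hd _
    field_simp
  calc ENNReal.ofReal (Real.exp (-(c * 2 ^ (1/(β-1)))) / 2 / (V x D * D ^ (β * γ)))
      = ENNReal.ofReal k * ENNReal.ofReal (D^β - D^β/2) := by
        rw [eq1, ENNReal.ofReal_mul hk0]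
    _ = ∫⁻ _ in Ioc (D^β/2) (D^β), ENNReal.ofReal k := by
        rw [setLIntegral_const, Real.volume_Ioc]
    _ ≤ ∫⁻ u in Ioc (D^β/2) (D^β),
        ENNReal.ofReal ((1 / V x (u ^ (1 / β))) *
          Real.exp (-(c * ((D ^ β / u) ^ (1 / (β - 1))))) * u ^ (-1 - γ)) := by
        apply setLIntegral_mono' measurableSet_Ioc
        intro u hu
        exact ENNReal.ofReal_le_ofReal (key u hu)
    _ ≤ _ := lintegral_mono_set (Ioc_subset_Ioc_left (by positivity))
end
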